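/- arXiv:1705.02625 — 11 statements merged into one kernel-verified Lean document; each statement's English description precedes it below -/
import Mathlib

section
/- If x is a locally uniformly rotund (LUR) point of the unit ball of a Banach space X, then x is a denting point of the unit ball. -/
open Filter Topology Metric

/-- A LUR point of the unit ball of a Banach space is a denting point of the unit ball. -/
theorem stmt0 {X : Type*} [NormedAddCommGroup X] [NormedSpace ℝ X] [CompleteSpace X]
    (x : X) (hx : ‖x‖ = 1)
    (hLUR : ∀ u : ℕ → X, (∀ n, ‖u n‖ ≤ 1) →
      Tendsto (fun n => ‖x + u n‖) atTop (nhds 2) →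
      Tendsto (fun n => ‖x - u n‖) atTop (nhds 0)) :
    ∀ ε > (0 : ℝ), ∃ (f : X →L[ℝ] ℝ) (δ : ℝ), f ≠ 0 ∧ 0 < δ ∧
      ∀ y ∈ {z : X | ‖z‖ ≤ 1 ∧ sSup (f '' {w : X | ‖w‖ ≤ 1}) - δ < f z},
        ∀ z ∈ {z : X | ‖z‖ ≤ 1 ∧ sSup (f '' {w : X | ‖w‖ ≤ 1}) - δ < f z},
          ‖y - z‖ < ε := by
  intro ε hε
  have hxne : x ≠ 0 := by
    intro h; rw [h, norm_zero] at hx; linarith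
  obtain ⟨f, hf1, hfx⟩ := exists_dual_vector ℝ x (norm_ne_zero_iff.mpr hxne)
  have hfx1 : f x = 1 := by rw [hfx, hx]; norm_num
  have hbound : ∀ w : X, ‖w‖ ≤ 1 → f w ≤ 1 := by
    intro w hw
    calc f w ≤ ‖f w‖ := le_abs_self _
      _ ≤ ‖f‖ * ‖w‖ := f.le_opNorm w
      _ ≤ 1 := by rw [hf1]; linarith
  have hSup : sSup (f '' {w : X | ‖w‖ ≤ 1}) = 1 := by
    apply le_antisymm
    · apply csSup_le
      · exact ⟨f x, ⟨x, by simp [hx], rfl⟩⟩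
      · rintro a ⟨w, hw, rfl⟩
        exact hbound w hw
    · have : f x ∈ f '' {w : X | ‖w‖ ≤ 1} := ⟨x, by simp [hx], rfl⟩
      calc (1 : ℝ) = f x := hfx1.symm
        _ ≤ sSup (f '' {w : X | ‖w‖ ≤ 1}) := le_csSup ⟨1, by
            rintro a ⟨w, hw, rfl⟩; exact hbound w hw⟩ this
  have key : ∃ δ > (0 : ℝ), ∀ y : X, ‖y‖ ≤ 1 → 1 - δ < f y → ‖x - y‖ < ε / 2 := by
    by_contra h
    push_neg at h
    have hsel : ∀ n : ℕ, ∃ y : X, ‖y‖ ≤ 1 ∧ 1 - 1 / (n + 1) < f y ∧ ε / 2 ≤ ‖x - y‖ := by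
      intro n
      obtain ⟨y, hy1, hy2, hy3⟩ := h (1 / (n + 1)) (by positivity)
      exact ⟨y, hy1, hy2, hy3⟩
    choose u hu1 hu2 hu3 using hsel
    have htend : Tendsto (fun n => ‖x + u n‖) atTop (nhds 2) := by
      have hlo : ∀ n : ℕ, 2 - 1 / (n + 1) ≤ ‖x + u n‖ := by
        intro n
        have : f (x + u n) ≤ ‖x + u n‖ := by
          calc f (x + u n) ≤ ‖f (x + u n)‖ := le_abs_self _
            _ ≤ ‖f‖ * ‖x + u n‖ := f.le_opNorm _
            _ = ‖x + u n‖ := by rw [hf1, one_mul]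
        have h2 : 2 - 1 / (n + 1) ≤ f (x + u n) := by
          have := hu2 n
          simp only [map_add, hfx1]
          linarith
        linarith
      have hhi : ∀ n : ℕ, ‖x + u n‖ ≤ 2 := by
        intro n
        calc ‖x + u n‖ ≤ ‖x‖ + ‖u n‖ := norm_add_le _ _
          _ ≤ 2 := by rw [hx]; linarith [hu1 n]
      have hl : Tendsto (fun n : ℕ => 2 - 1 / ((n : ℝ) + 1)) atTop (nhds 2) := by
        have := tendsto_one_div_add_atTop_nhds_zero_nat (𝕜 := ℝ)
        have h2 := (tendsto_const_nhds (x := (2:ℝ)) (f := atTop)).sub this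
        simpa using h2
      exact tendsto_of_tendsto_of_tendsto_of_le_of_le hl tendsto_const_nhds hlo hhi
    have := hLUR u hu1 htend
    have hge : ε / 2 ≤ (0 : ℝ) := ge_of_tendsto this (Eventually.of_forall hu3)
    linarith
  obtain ⟨δ, hδ, hδp⟩ := key
  refine ⟨f, δ, ?_, hδ, ?_⟩
  · intro h
    rw [h] at hf1
    simp at hf1
  · rintro y ⟨hy1, hy2⟩ z ⟨hz1, hz2⟩
    rw [hSup] at hy2 hz2
    have h1 : ‖x - y‖ < ε / 2 := hδp y hy1 hy2
    have h2 : ‖x - z‖ < ε / 2 := hδp z hz1 hz2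
    calc ‖y - z‖ = ‖(y - x) + (x - z)‖ := by rw [sub_add_sub_cancel]
      _ ≤ ‖y - x‖ + ‖x - z‖ := norm_add_le _ _
      _ = ‖x - y‖ + ‖x - z‖ := by rw [norm_sub_rev]
      _ < ε := by linarith
end

section
/- If x is a denting point of a bounded closed convex set B in a Banach space, then x is a strongly extreme point of B. -/
open Filter Topology Metric

/-- A denting point of a bounded closed convex set is a strongly extreme point. -/
theorem stmt1 {X : Type*} [NormedAddCommGroup X] [NormedSpace ℝ X] [CompleteSpace X]
    (B : Set X) (hne : B.Nonempty) (hbdd : Bornology.IsBounded B)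
    (hcl : IsClosed B) (hconv : Convex ℝ B)
    (x : X) (hx : x ∈ B)
    (hdent : ∀ ε > (0 : ℝ), ∃ (f : X →L[ℝ] ℝ) (δ : ℝ), f ≠ 0 ∧ 0 < δ ∧
      x ∈ {y ∈ B | sSup (f '' B) - δ < f y} ∧
      ∀ y ∈ {y ∈ B | sSup (f '' B) - δ < f y},
        ∀ z ∈ {y ∈ B | sSup (f '' B) - δ < f y}, ‖y - z‖ < ε) :
    ∀ (y z : ℕ → X), (∀ n, y n ∈ B) → (∀ n, z n ∈ B) →
      Tendsto (fun n => ‖x - (1/2 : ℝ) • (y n + z n)‖) atTop (nhds 0) →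
      Tendsto (fun n => ‖y n - z n‖) atTop (nhds 0) := by
  intro y z hy hz hmid
  rw [Metric.tendsto_atTop]
  intro ε hε
  obtain ⟨f, δ, hf0, hδ, ⟨hxB, hxf⟩, hdiam⟩ := hdent (ε/3) (by positivity)
  set M := sSup (f '' B) with hM
  set c : ℝ := f x - (M - δ) with hc
  have hc0 : 0 < c := by simp only [hc]; linarith
  -- M is an upper bound of f on B
  have hbdd' : BddAbove (f '' B) := by
    obtain ⟨R, hR⟩ := hbdd.subset_closedBall 0
    refine ⟨‖f‖ * R, ?_⟩
    rintro _ ⟨w, hw, rfl⟩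
    have h1 : |f w| ≤ ‖f‖ * ‖w‖ := by
      simpa [Real.norm_eq_abs] using f.le_opNorm w
    have h2 : ‖w‖ ≤ R := by simpa using hR hw
    have := (abs_le.1 h1).2
    calc f w ≤ ‖f‖ * ‖w‖ := le_of_abs_le h1
      _ ≤ ‖f‖ * R := by
        exact mul_le_mul_of_nonneg_left h2 (norm_nonneg f)
  have hub : ∀ w ∈ B, f w ≤ M := fun w hw => le_csSup hbdd' ⟨w, hw, rfl⟩
  -- the midpoints converge to x
  have hm : Tendsto (fun n => (1/2 : ℝ) • (y n + z n)) atTop (nhds x) := by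
    rw [tendsto_iff_norm_sub_tendsto_zero]
    simpa [norm_sub_rev] using hmid
  have hfm : Tendsto (fun n => f ((1/2 : ℝ) • (y n + z n))) atTop (nhds (f x)) :=
    (f.continuous.tendsto x).comp hm
  obtain ⟨N, hN⟩ := Metric.tendsto_atTop.1 hfm (c/2) (by positivity)
  refine ⟨N, fun n hn => ?_⟩
  have hmn := hN n hn
  rw [Real.dist_eq] at hmn
  have habs := abs_lt.1 hmn
  have hfmval : f ((1/2 : ℝ) • (y n + z n)) = (f (y n) + f (z n)) / 2 := by
    rw [map_smul, map_add]
    simp [smul_eq_mul]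
    ring
  have hfmn : M - δ + c / 2 < f ((1/2 : ℝ) • (y n + z n)) := by
    have : f x = M - δ + c := by simp [hc]
    linarith [habs.1]
  have hmemB : (1/2 : ℝ) • (y n + z n) ∈ B := by
    have := hconv (hy n) (hz n) (by norm_num : (0:ℝ) ≤ 1/2)
      (by norm_num : (0:ℝ) ≤ 1/2) (by norm_num)
    simpa [smul_add] using this
  have hmS : (1/2 : ℝ) • (y n + z n) ∈ {w ∈ B | M - δ < f w} :=
    ⟨hmemB, by linarith⟩
  -- key norm identities
  have hid1 : ‖y n - (1/2 : ℝ) • (y n + z n)‖ = ‖y n - z n‖ / 2 := by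
    have : y n - (1/2 : ℝ) • (y n + z n) = (1/2 : ℝ) • (y n - z n) := by
      rw [smul_sub, smul_add]
      module
    rw [this, norm_smul]
    simp [Real.norm_eq_abs]
    ring
  have hid2 : ‖z n - (1/2 : ℝ) • (y n + z n)‖ = ‖y n - z n‖ / 2 := by
    have : z n - (1/2 : ℝ) • (y n + z n) = (-(1/2) : ℝ) • (y n - z n) := by
      rw [smul_sub, smul_add]
      module
    rw [this, norm_smul]
    simp [Real.norm_eq_abs]
    ring
  have hgoal : ‖y n - z n‖ < ε := by
    by_cases h1 : M - δ < f (y n)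
    · have := hdiam _ ⟨hy n, h1⟩ _ hmS
      rw [hid1] at this
      linarith
    · -- then f (z n) > M - δ
      have hzslice : M - δ < f (z n) := by
        push_neg at h1
        have := hub (y n) (hy n)
        -- f(yn) + f(zn) = 2 * f(mid) > 2(M - δ + c/2)
        have h2 : (f (y n) + f (z n)) / 2 > M - δ + c / 2 := by
          rw [← hfmval]; exact hfmn
        linarith
      have := hdiam _ ⟨hz n, hzslice⟩ _ hmS
      rw [hid2] at this
      linarith
  rw [Real.dist_eq]
  rw [abs_of_nonneg (by linarith [norm_nonneg (y n - z n)])]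
  simpa using hgoal
end

section
/- Let x be a strongly extreme point of a convex set C in a normed space X and let 0 < λ ≤ 1. Assume that for every η > 0 there exist a weak neighbourhood W of x and a map Φ : W ∩ C → X such that Φ(W ∩ C) ⊆ B(x, η) and sup_{w ∈ W ∩ C} dist((1+λ)Φw − λw, C) < η. Then x is a point of continuity of C, i.e., the identity map on C is weak-to-norm continuous at x. -/
open Filter Topology Metric

/-- Proposition: if a strongly extreme point `x` of a convex set `C` admits, for every `η > 0`,
a map `Φ` on a weak neighbourhood `W` of `x` with `Φ(W ∩ C) ⊆ B(x,η)` and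
`dist((1+λ)Φw − λw, C) < η` for all `w ∈ W ∩ C`, then `x` is a point of continuity of `C`. -/
theorem stmt4 {X : Type*} [NormedAddCommGroup X] [NormedSpace ℝ X]
    (C : Set X) (hconv : Convex ℝ C) (x : X) (hx : x ∈ C)
    (hse : ∀ (y z : ℕ → X), (∀ n, y n ∈ C) → (∀ n, z n ∈ C) →
      Tendsto (fun n => ‖x - (1/2 : ℝ) • (y n + z n)‖) atTop (nhds 0) →
      Tendsto (fun n => ‖y n - z n‖) atTop (nhds 0))
    (lam : ℝ) (hlam0 : 0 < lam) (hlam1 : lam ≤ 1)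
    (h : ∀ η > (0 : ℝ), ∃ (s : Finset (X →L[ℝ] ℝ)) (δ : ℝ) (Φ : X → X), 0 < δ ∧
      ∀ w ∈ C, (∀ f ∈ s, |f w - f x| < δ) →
        Φ w ∈ closedBall x η ∧ infDist ((1 + lam) • Φ w - lam • w) C < η) :
    ∀ ε > (0 : ℝ), ∃ (s : Finset (X →L[ℝ] ℝ)) (δ : ℝ), 0 < δ ∧
      ∀ w ∈ C, (∀ f ∈ s, |f w - f x| < δ) → w ∈ closedBall x ε := by
  intro ε hε
  by_contra hcon
  push_neg at hcon
  have key : ∀ n : ℕ, ∃ w c : X, w ∈ C ∧ c ∈ C ∧ ε < ‖w - x‖ ∧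
      ‖(1 + lam) • x - lam • w - c‖ ≤ 3 / (n + 1) := by
    intro n
    have hη : (0:ℝ) < 1 / (n + 1) := by positivity
    obtain ⟨s, δ, Φ, hδ, hΦ⟩ := h (1 / (n + 1)) hη
    obtain ⟨w, hwC, hwweak, hwfar⟩ := hcon s δ hδ
    obtain ⟨hball, hinf⟩ := hΦ w hwC hwweak
    obtain ⟨c, hcC, hc⟩ := (Metric.infDist_lt_iff ⟨x, hx⟩).mp hinf
    have h1 : ‖x - Φ w‖ ≤ 1 / (n + 1) := by
      have := mem_closedBall.mp hball
      rw [dist_eq_norm] at this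
      rwa [norm_sub_rev]
    have h2 : ‖(1 + lam) • Φ w - lam • w - c‖ < 1 / (n + 1) := by
      rw [← dist_eq_norm] at *
      exact hc
    refine ⟨w, c, hwC, hcC, ?_, ?_⟩
    · rw [mem_closedBall, dist_eq_norm] at hwfar
      exact lt_of_not_ge hwfar
    · have heq : (1 + lam) • x - lam • w - c
          = (1 + lam) • (x - Φ w) + ((1 + lam) • Φ w - lam • w - c) := by module
      calc ‖(1 + lam) • x - lam • w - c‖
          ≤ ‖(1 + lam) • (x - Φ w)‖ + ‖(1 + lam) • Φ w - lam • w - c‖ := by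
            rw [heq]; exact norm_add_le _ _
        _ ≤ 2 * (1 / (n + 1)) + 1 / (n + 1) := by
            refine add_le_add ?_ h2.le
            rw [norm_smul, Real.norm_eq_abs, abs_of_pos (by linarith)]
            have : ‖x - Φ w‖ ≤ 1 / (n + 1) := h1
            nlinarith [norm_nonneg (x - Φ w)]
        _ = 3 / (n + 1) := by ring
  choose w c hwC hcC hfar hd using key
  set y : ℕ → X := fun n => (1 - lam) • x + lam • w n with hy
  have hyC : ∀ n, y n ∈ C := fun n => hconv hx (hwC n) (by linarith) hlam0.le (by ring)
  have hmid : Tendsto (fun n => ‖x - (1/2 : ℝ) • (y n + c n)‖) atTop (nhds 0) := by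
    have hb : ∀ n : ℕ, ‖x - (1/2 : ℝ) • (y n + c n)‖ ≤ (3/2) * (1 / (n + 1)) := by
      intro n
      have heq : x - (1/2 : ℝ) • (y n + c n)
          = (1/2 : ℝ) • ((1 + lam) • x - lam • w n - c n) := by
        rw [hy]; module
      rw [heq, norm_smul, Real.norm_eq_abs]
      have := hd n
      rw [abs_of_pos (by norm_num : (0:ℝ) < 1/2)]
      have h3 : (3 : ℝ) / (n + 1) = 3 * (1 / (n + 1)) := by ring
      nlinarith [norm_nonneg ((1 + lam) • x - lam • w n - c n)]
    have hlim : Tendsto (fun n : ℕ => (3/2 : ℝ) * (1 / (n + 1))) atTop (nhds 0) := by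
      have := tendsto_one_div_add_atTop_nhds_zero_nat (𝕜 := ℝ)
      have := this.const_mul (3/2 : ℝ)
      simpa using this
    exact squeeze_zero (fun n => norm_nonneg _) hb hlim
  have hlim := hse y c hyC hcC hmid
  have hev1 : ∀ᶠ n : ℕ in atTop, ‖y n - c n‖ < lam * ε :=
    hlim.eventually_lt_const (by positivity)
  have hev2 : ∀ᶠ n : ℕ in atTop, (3 : ℝ) / (n + 1) < lam * ε := by
    have h3 : Tendsto (fun n : ℕ => (3 : ℝ) / (n + 1)) atTop (nhds 0) := by
      have := tendsto_one_div_add_atTop_nhds_zero_nat.const_mul (3 : ℝ)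
      simpa [div_eq_mul_inv, mul_comm] using this
    exact h3.eventually_lt_const (by positivity)
  obtain ⟨n, h1, h2⟩ := (hev1.and hev2).exists
  have heq : (2 * lam) • (w n - x) = (y n - c n) - ((1 + lam) • x - lam • w n - c n) := by
    rw [hy]; module
  have hnorm : 2 * lam * ‖w n - x‖ ≤ ‖y n - c n‖ + ‖(1 + lam) • x - lam • w n - c n‖ := by
    calc 2 * lam * ‖w n - x‖ = ‖(2 * lam) • (w n - x)‖ := by
          rw [norm_smul, Real.norm_eq_abs, abs_of_pos (by linarith)]
      _ ≤ _ := by rw [heq]; exact norm_sub_le _ _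
  have := hd n
  have := hfar n
  nlinarith [norm_nonneg (w n - x)]
end

section
/- In the space c of convergent real sequences with the supremum norm, the point e = (1, 1, 1, …) is a strongly extreme point of the unit ball. -/
open Filter Topology BoundedContinuousFunction

lemma key_bound (v : ℕ →ᵇ ℝ) :
    ‖v‖ ≤ max ‖BoundedContinuousFunction.const ℕ (1 : ℝ) + v‖
          ‖BoundedContinuousFunction.const ℕ (1 : ℝ) - v‖ - 1 := by
  set C := max ‖BoundedContinuousFunction.const ℕ (1 : ℝ) + v‖
          ‖BoundedContinuousFunction.const ℕ (1 : ℝ) - v‖ with hC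
  have h : ∀ k, |v k| ≤ C - 1 := by
    intro k
    have h1 : |1 + v k| ≤ C := by
      have := (BoundedContinuousFunction.const ℕ (1 : ℝ) + v).norm_coe_le_norm k
      simp only [BoundedContinuousFunction.coe_add, BoundedContinuousFunction.const_apply,
        Pi.add_apply, Real.norm_eq_abs] at this
      exact this.trans (le_max_left _ _)
    have h2 : |1 - v k| ≤ C := by
      have := (BoundedContinuousFunction.const ℕ (1 : ℝ) - v).norm_coe_le_norm k
      simp only [BoundedContinuousFunction.coe_sub, BoundedContinuousFunction.const_apply,
        Pi.sub_apply, Real.norm_eq_abs] at this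
      exact this.trans (le_max_right _ _)
    rcases le_or_gt 0 (v k) with h | h
    · have : 1 + v k ≤ C := (le_abs_self _).trans h1
      rw [abs_of_nonneg h]; linarith
    · have : 1 - v k ≤ C := (le_abs_self _).trans h2
      rw [abs_of_neg h]; linarith
  have hC0 : (0 : ℝ) ≤ C - 1 := le_trans (abs_nonneg _) (h 0)
  exact (BoundedContinuousFunction.norm_le hC0).2 fun k => by
    simpa using h k

/-- In the space `c` of convergent real sequences (inside `ℓ∞ = ℕ →ᵇ ℝ`), the constant-one
sequence is a strongly extreme point of the unit ball. -/
theorem stmt7 :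
    ∀ v : ℕ → (ℕ →ᵇ ℝ), (∀ n, ∃ l : ℝ, Tendsto (⇑(v n)) atTop (nhds l)) →
      Tendsto (fun n => ‖BoundedContinuousFunction.const ℕ (1 : ℝ) + v n‖) atTop (nhds 1) →
      Tendsto (fun n => ‖BoundedContinuousFunction.const ℕ (1 : ℝ) - v n‖) atTop (nhds 1) →
      Tendsto (fun n => ‖v n‖) atTop (nhds 0) := by
  intro v _ h1 h2
  have hmax : Tendsto (fun n => max ‖BoundedContinuousFunction.const ℕ (1 : ℝ) + v n‖
      ‖BoundedContinuousFunction.const ℕ (1 : ℝ) - v n‖ - 1) atTop (nhds 0) := by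
    have := (h1.max h2).sub (tendsto_const_nhds (x := (1 : ℝ)))
    simpa using this
  exact squeeze_zero (fun n => norm_nonneg _) (fun n => key_bound (v n)) hmax
end

section
/- In the space c of convergent real sequences with the supremum norm, the point e = (1, 1, 1, …) is not a denting point of the unit ball. -/
open Filter Topology BoundedContinuousFunction

noncomputable def en (n : ℕ) : ℕ →ᵇ ℝ :=
  BoundedContinuousFunction.ofNormedAddCommGroupDiscrete
    (fun m => if m = n then 1 else 0) 1 (by intro m; dsimp; split <;> norm_num)

lemma en_apply (n m : ℕ) : en n m = if m = n then 1 else 0 := rfl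

/-- In the space `c` of convergent real sequences (inside `ℓ∞ = ℕ →ᵇ ℝ`), the constant-one
sequence is not a denting point of the unit ball of `c`. -/
theorem stmt8 :
    ¬ (∀ ε > (0 : ℝ), ∃ (f : (ℕ →ᵇ ℝ) →L[ℝ] ℝ) (δ : ℝ), f ≠ 0 ∧ 0 < δ ∧
      BoundedContinuousFunction.const ℕ (1 : ℝ) ∈
        {y ∈ {u : ℕ →ᵇ ℝ | ‖u‖ ≤ 1 ∧ ∃ l : ℝ, Tendsto (⇑u) atTop (nhds l)} |
          sSup (f '' {u : ℕ →ᵇ ℝ | ‖u‖ ≤ 1 ∧ ∃ l : ℝ, Tendsto (⇑u) atTop (nhds l)}) - δ < f y} ∧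
      ∀ y ∈ {y ∈ {u : ℕ →ᵇ ℝ | ‖u‖ ≤ 1 ∧ ∃ l : ℝ, Tendsto (⇑u) atTop (nhds l)} |
          sSup (f '' {u : ℕ →ᵇ ℝ | ‖u‖ ≤ 1 ∧ ∃ l : ℝ, Tendsto (⇑u) atTop (nhds l)}) - δ < f y},
        ∀ z ∈ {y ∈ {u : ℕ →ᵇ ℝ | ‖u‖ ≤ 1 ∧ ∃ l : ℝ, Tendsto (⇑u) atTop (nhds l)} |
          sSup (f '' {u : ℕ →ᵇ ℝ | ‖u‖ ≤ 1 ∧ ∃ l : ℝ, Tendsto (⇑u) atTop (nhds l)}) - δ < f y},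
          ‖y - z‖ < ε) := by
  intro h
  obtain ⟨f, δ, hf0, hδ, he, hy⟩ := h 1 one_pos
  set S := {u : ℕ →ᵇ ℝ | ‖u‖ ≤ 1 ∧ ∃ l : ℝ, Tendsto (⇑u) atTop (nhds l)} with hS
  set M := sSup (f '' S) with hM
  obtain ⟨heS, heSl⟩ := he
  set η := f (BoundedContinuousFunction.const ℕ (1 : ℝ)) - (M - δ) with hη
  have hη0 : 0 < η := by simp only [hη]; linarith
  -- find n with f (en n) < η / 2
  have hexists : ∃ n, f (en n) < η / 2 := by
    by_contra hc
    push_neg at hc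
    set N : ℕ := ⌈2 * ‖f‖ / η⌉₊ + 1 with hN
    set x : ℕ →ᵇ ℝ := ∑ n ∈ Finset.range N, en n with hx
    have hxnorm : ‖x‖ ≤ 1 := by
      rw [BoundedContinuousFunction.norm_le zero_le_one]
      intro m
      have : x m = ∑ n ∈ Finset.range N, en n m := by
        rw [hx]; simp
      rw [this]
      simp only [en_apply]
      rw [Finset.sum_ite_eq (Finset.range N) m (fun _ => (1 : ℝ))]
      split <;> simp
    have hfx : (N : ℝ) * (η / 2) ≤ f x := by
      rw [hx, map_sum]
      calc (N : ℝ) * (η / 2) = ∑ n ∈ Finset.range N, η / 2 := by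
            simp [mul_comm]
        _ ≤ ∑ n ∈ Finset.range N, f (en n) := Finset.sum_le_sum fun n _ => hc n
    have hfx2 : f x ≤ ‖f‖ := by
      calc f x ≤ ‖f x‖ := le_abs_self _
        _ ≤ ‖f‖ * ‖x‖ := f.le_opNorm x
        _ ≤ ‖f‖ * 1 := by
            exact mul_le_mul_of_nonneg_left hxnorm (norm_nonneg f)
        _ = ‖f‖ := mul_one _
    have hNle : (N : ℝ) ≤ 2 * ‖f‖ / η := by
      rw [le_div_iff₀ hη0]
      nlinarith
    have hNgt : 2 * ‖f‖ / η < (N : ℝ) := by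
      have := Nat.le_ceil (2 * ‖f‖ / η)
      push_cast [hN]
      linarith
    linarith
  obtain ⟨n, hn⟩ := hexists
  set x : ℕ →ᵇ ℝ := BoundedContinuousFunction.const ℕ (1 : ℝ) - (2 : ℝ) • en n with hx
  have hxval : ∀ m, x m = 1 - 2 * (if m = n then 1 else 0) := by
    intro m; rw [hx]; simp [en_apply]
  have hxS : x ∈ S := by
    constructor
    · rw [BoundedContinuousFunction.norm_le zero_le_one]
      intro m
      rw [hxval m]
      split <;> norm_num
    · refine ⟨1, Tendsto.congr' ?_ tendsto_const_nhds⟩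
      filter_upwards [Filter.eventually_ge_atTop (n + 1)] with m hm
      rw [hxval m, if_neg (by omega)]
      ring
  have hxslice : M - δ < f x := by
    have : f x = f (BoundedContinuousFunction.const ℕ (1 : ℝ)) - 2 * f (en n) := by
      rw [hx]; simp [map_sub]
    rw [this]
    simp only [hη] at hn ⊢
    linarith
  have hd := hy (BoundedContinuousFunction.const ℕ (1 : ℝ)) ⟨heS, heSl⟩ x ⟨hxS, hxslice⟩
  have h2 : (2 : ℝ) ≤ ‖BoundedContinuousFunction.const ℕ (1 : ℝ) - x‖ := by
    have := BoundedContinuousFunction.norm_coe_le_norm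
      (BoundedContinuousFunction.const ℕ (1 : ℝ) - x) n
    have hv : (BoundedContinuousFunction.const ℕ (1 : ℝ) - x) n = 2 := by
      simp [hxval n]
    rw [hv] at this
    simpa using this
  linarith
end

section
/- The constant function x(t) ≡ 1 is a strongly extreme point of the unit ball of C[0,1], but the identity map is not weak-to-norm continuous at x on the unit ball (x is not a point of continuity). -/
open Filter Topology Metric

noncomputable def bump (N j : ℕ) : C(Set.Icc (0:ℝ) 1, ℝ) :=
  ⟨fun t => -2 * max 0 (1 - 2*N*|t.1 - (2*j+1)/(2*N)|), by fun_prop⟩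

lemma bump_apply (N j : ℕ) (t : Set.Icc (0:ℝ) 1) :
    bump N j t = -2 * max 0 (1 - 2*N*|t.1 - (2*j+1)/(2*N)|) := rfl

lemma bump_nonpos (N j : ℕ) (t : Set.Icc (0:ℝ) 1) : bump N j t ≤ 0 := by
  have : (0:ℝ) ≤ max 0 (1 - 2*N*|t.1 - (2*j+1)/(2*N)|) := le_max_left _ _
  rw [bump_apply]; nlinarith

lemma bump_ge (N j : ℕ) (t : Set.Icc (0:ℝ) 1) : -2 ≤ bump N j t := by
  have h1 : max 0 (1 - 2*N*|t.1 - (2*j+1)/(2*N)|) ≤ 1 :=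
    max_le (by norm_num)
      (by nlinarith [abs_nonneg (t.1 - (2*j+1)/(2*N)), Nat.cast_nonneg (α := ℝ) N])
  rw [bump_apply]; nlinarith

lemma bump_disjoint {N j j' : ℕ} (hN : 0 < N) (hjj' : j ≠ j') (t : Set.Icc (0:ℝ) 1) :
    bump N j t = 0 ∨ bump N j' t = 0 := by
  by_contra h
  push_neg at h
  obtain ⟨h1, h2⟩ := h
  rw [bump_apply] at h1 h2
  have hN' : (0:ℝ) < N := by exact_mod_cast hN
  have e1 : 0 < 1 - 2*N*|t.1 - (2*j+1)/(2*N)| := by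
    rcases le_or_gt (1 - 2*N*|t.1 - (2*j+1)/(2*N)|) 0 with h | h
    · exact absurd (by rw [max_eq_left h]; ring) h1
    · exact h
  have e2 : 0 < 1 - 2*N*|t.1 - (2*j'+1)/(2*N)| := by
    rcases le_or_gt (1 - 2*N*|t.1 - (2*j'+1)/(2*N)|) 0 with h | h
    · exact absurd (by rw [max_eq_left h]; ring) h2
    · exact h
  have key : |((2*j+1)/(2*N) : ℝ) - (2*j'+1)/(2*N)| < 1/N := by
    calc |((2*j+1)/(2*N) : ℝ) - (2*j'+1)/(2*N)|
        ≤ |((2*j+1)/(2*N) : ℝ) - t.1| + |t.1 - (2*j'+1)/(2*N)| := abs_sub_le _ _ _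
      _ < 1/N := by
          rw [abs_sub_comm ((2*j+1)/(2*N) : ℝ) t.1]
          have b1 : |t.1 - (2*j+1)/(2*N)| < 1/(2*N) := by
            rw [lt_div_iff₀ (by positivity)]; nlinarith
          have b2 : |t.1 - (2*j'+1)/(2*N)| < 1/(2*N) := by
            rw [lt_div_iff₀ (by positivity)]; nlinarith
          have : 1/(2*(N:ℝ)) = (1/N)/2 := by ring
          linarith
  have hge : (1:ℝ)/N ≤ |((2*j+1)/(2*N) : ℝ) - (2*j'+1)/(2*N)| := by
    have heq : ((2*j+1)/(2*N) : ℝ) - (2*j'+1)/(2*N) = ((j:ℝ) - j')/N := by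
      field_simp; ring
    have hz : (1:ℤ) ≤ |(j:ℤ) - j'| := Int.one_le_abs (by omega)
    have hcast : (1:ℝ) ≤ |(j:ℝ) - j'| := by
      exact_mod_cast (by push_cast at hz ⊢; exact_mod_cast hz :
        (1:ℝ) ≤ |((j:ℤ):ℝ) - ((j':ℤ):ℝ)|)
    rw [heq, abs_div, abs_of_pos hN']
    gcongr
  linarith

lemma bump_sum_abs_le (N : ℕ) (hN : 0 < N) (t : Set.Icc (0:ℝ) 1) :
    ∑ j ∈ Finset.range N, |bump N j t| ≤ 2 := by
  by_cases h : ∀ j ∈ Finset.range N, bump N j t = 0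
  · rw [Finset.sum_congr rfl (fun j hj => by rw [h j hj, abs_zero])]
    simp
  · push_neg at h
    obtain ⟨j0, hj0, hne⟩ := h
    have : ∑ j ∈ Finset.range N, |bump N j t| = |bump N j0 t| := by
      apply Finset.sum_eq_single_of_mem j0 hj0
      intro j hj hjne
      rcases bump_disjoint hN hjne t with h | h
      · rw [h, abs_zero]
      · exact absurd h hne
    rw [this, bump_apply, abs_mul]
    have h1 : max 0 (1 - 2*N*|t.1 - (2*j0+1)/(2*N)|) ≤ 1 :=
      max_le (by norm_num)
        (by nlinarith [abs_nonneg (t.1 - (2*j0+1)/(2*N)), Nat.cast_nonneg (α := ℝ) N])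
    have h0 : (0:ℝ) ≤ max 0 (1 - 2*N*|t.1 - (2*j0+1)/(2*N)|) := le_max_left _ _
    rw [abs_of_nonneg h0, show |(-2:ℝ)| = 2 by norm_num]
    linarith

lemma sum_abs_f_bump_le (N : ℕ) (hN : 0 < N) (f : C(Set.Icc (0:ℝ) 1, ℝ) →L[ℝ] ℝ) :
    ∑ j ∈ Finset.range N, |f (bump N j)| ≤ 2 * ‖f‖ := by
  set g : C(Set.Icc (0:ℝ) 1, ℝ) :=
    ∑ j ∈ Finset.range N, (if 0 ≤ f (bump N j) then (1:ℝ) else -1) • bump N j with hg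
  have hfg : f g = ∑ j ∈ Finset.range N, |f (bump N j)| := by
    rw [hg, map_sum]
    refine Finset.sum_congr rfl fun j _ => ?_
    rw [map_smul]
    by_cases h : 0 ≤ f (bump N j)
    · rw [if_pos h, abs_of_nonneg h]; simp
    · rw [if_neg h, abs_of_neg (lt_of_not_ge h)]; simp
  have hgnorm : ‖g‖ ≤ 2 := by
    rw [ContinuousMap.norm_le _ (by norm_num)]
    intro t
    have : g t = ∑ j ∈ Finset.range N,
        (if 0 ≤ f (bump N j) then (1:ℝ) else -1) * bump N j t := by
      rw [hg]
      simp [ContinuousMap.sum_apply, apply_ite (fun φ : C(Set.Icc (0:ℝ) 1, ℝ) => φ t)]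
    rw [this]
    calc ‖∑ j ∈ Finset.range N, (if 0 ≤ f (bump N j) then (1:ℝ) else -1) * bump N j t‖
        ≤ ∑ j ∈ Finset.range N, ‖(if 0 ≤ f (bump N j) then (1:ℝ) else -1) * bump N j t‖ :=
          norm_sum_le _ _
      _ = ∑ j ∈ Finset.range N, |bump N j t| := by
          refine Finset.sum_congr rfl fun j _ => ?_
          rw [Real.norm_eq_abs, abs_mul]
          by_cases h : 0 ≤ f (bump N j) <;> simp [h]
      _ ≤ 2 := bump_sum_abs_le N hN t
  calc ∑ j ∈ Finset.range N, |f (bump N j)| = f g := hfg.symm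
    _ ≤ |f g| := le_abs_self _
    _ ≤ ‖f‖ * ‖g‖ := f.le_opNorm g
    _ ≤ ‖f‖ * 2 := by nlinarith [norm_nonneg f]
    _ = 2 * ‖f‖ := by ring

/-- The constant function `1` is a strongly extreme point of the unit ball of `C[0,1]`,
but it is not a point of continuity of the unit ball. -/
theorem stmt9 :
    (∀ v : ℕ → C(Set.Icc (0:ℝ) 1, ℝ),
      Tendsto (fun n => ‖ContinuousMap.const (Set.Icc (0:ℝ) 1) (1 : ℝ) + v n‖) atTop (nhds 1) →
      Tendsto (fun n => ‖ContinuousMap.const (Set.Icc (0:ℝ) 1) (1 : ℝ) - v n‖) atTop (nhds 1) →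
      Tendsto (fun n => ‖v n‖) atTop (nhds 0))
    ∧
    ¬ (∀ ε > (0 : ℝ), ∃ (s : Finset (C(Set.Icc (0:ℝ) 1, ℝ) →L[ℝ] ℝ)) (δ : ℝ), 0 < δ ∧
        ∀ y : C(Set.Icc (0:ℝ) 1, ℝ), ‖y‖ ≤ 1 →
          (∀ f ∈ s, |f y - f (ContinuousMap.const (Set.Icc (0:ℝ) 1) (1 : ℝ))| < δ) →
          ‖y - ContinuousMap.const (Set.Icc (0:ℝ) 1) (1 : ℝ)‖ ≤ ε) := by
  constructor
  · -- strongly extreme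
    intro v h1 h2
    have key : ∀ n, ‖v n‖ ≤ max ‖ContinuousMap.const (Set.Icc (0:ℝ) 1) (1 : ℝ) + v n‖
        ‖ContinuousMap.const (Set.Icc (0:ℝ) 1) (1 : ℝ) - v n‖ - 1 := by
      intro n
      set a := ‖ContinuousMap.const (Set.Icc (0:ℝ) 1) (1 : ℝ) + v n‖ with ha
      set b := ‖ContinuousMap.const (Set.Icc (0:ℝ) 1) (1 : ℝ) - v n‖ with hb
      have hmax : 1 ≤ max a b := by
        have := (ContinuousMap.const (Set.Icc (0:ℝ) 1) (1 : ℝ) + v n).norm_coe_le_norm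
          ⟨0, by norm_num⟩
        have h2' := (ContinuousMap.const (Set.Icc (0:ℝ) 1) (1 : ℝ) - v n).norm_coe_le_norm
          ⟨0, by norm_num⟩
        simp only [ContinuousMap.add_apply, ContinuousMap.sub_apply,
          ContinuousMap.const_apply, Real.norm_eq_abs] at this h2'
        rcases le_total 0 (v n ⟨0, by norm_num⟩) with h | h
        · have : 1 ≤ a := le_trans (by rw [abs_of_nonneg (by linarith)]; linarith) this
          exact le_max_of_le_left this
        · have : 1 ≤ b := le_trans (by rw [abs_of_nonneg (by linarith)]; linarith) h2'
          exact le_max_of_le_right this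
      rw [ContinuousMap.norm_le _ (by linarith)]
      intro t
      have hat := (ContinuousMap.const (Set.Icc (0:ℝ) 1) (1 : ℝ) + v n).norm_coe_le_norm t
      have hbt := (ContinuousMap.const (Set.Icc (0:ℝ) 1) (1 : ℝ) - v n).norm_coe_le_norm t
      simp only [ContinuousMap.add_apply, ContinuousMap.sub_apply,
        ContinuousMap.const_apply, Real.norm_eq_abs] at hat hbt
      rw [Real.norm_eq_abs]
      rcases le_total 0 (v n t) with h | h
      · rw [abs_of_nonneg h]
        have : 1 + v n t ≤ a := le_trans (le_abs_self _) hat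
        have : a ≤ max a b := le_max_left _ _
        linarith [le_trans (le_abs_self (1 + v n t)) hat]
      · rw [abs_of_nonpos h]
        have h1' : 1 - v n t ≤ b := le_trans (le_abs_self _) hbt
        have : b ≤ max a b := le_max_right _ _
        linarith
    have hlim : Tendsto (fun n => max ‖ContinuousMap.const (Set.Icc (0:ℝ) 1) (1 : ℝ) + v n‖
        ‖ContinuousMap.const (Set.Icc (0:ℝ) 1) (1 : ℝ) - v n‖ - 1) atTop (nhds 0) := by
      have := (h1.max h2).sub (tendsto_const_nhds (x := (1:ℝ)))
      simpa using this
    exact squeeze_zero (fun n => norm_nonneg _) key hlim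
  · -- not a point of continuity
    intro H
    obtain ⟨s, δ, hδ, hy⟩ := H 1 one_pos
    set M := ∑ f ∈ s, ‖f‖ with hM
    have hM0 : 0 ≤ M := Finset.sum_nonneg fun f _ => norm_nonneg f
    set N := ⌊2*M/δ⌋₊ + 1 with hN
    have hNpos : 0 < N := Nat.succ_pos _
    have hNbig : 2*M < N * δ := by
      have h1 : 2*M/δ < N := by
        rw [hN]; push_cast; exact Nat.lt_floor_add_one _
      calc 2*M = (2*M/δ) * δ := by field_simp
        _ < N * δ := by exact mul_lt_mul_of_pos_right h1 hδ
    -- find a good bump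
    have hgood : ∃ j ∈ Finset.range N, ∀ f ∈ s, |f (bump N j)| < δ := by
      by_contra h
      push_neg at h
      have hstep : ∀ j ∈ Finset.range N, δ ≤ ∑ f ∈ s, |f (bump N j)| := by
        intro j hj
        obtain ⟨f, hf, hfd⟩ := h j hj
        exact le_trans hfd (Finset.single_le_sum (f := fun g => |g (bump N j)|) (fun g _ => abs_nonneg _) hf)
      have : (N : ℝ) * δ ≤ ∑ j ∈ Finset.range N, ∑ f ∈ s, |f (bump N j)| := by
        calc (N : ℝ) * δ = ∑ _j ∈ Finset.range N, δ := by
              rw [Finset.sum_const, Finset.card_range, nsmul_eq_mul]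
          _ ≤ _ := Finset.sum_le_sum hstep
      rw [Finset.sum_comm] at this
      have hbound : ∑ f ∈ s, ∑ j ∈ Finset.range N, |f (bump N j)| ≤ 2 * M := by
        rw [hM, Finset.mul_sum]
        exact Finset.sum_le_sum fun f _ => sum_abs_f_bump_le N hNpos f
      linarith
    obtain ⟨j, hjN, hj⟩ := hgood
    rw [Finset.mem_range] at hjN
    set y := ContinuousMap.const (Set.Icc (0:ℝ) 1) (1 : ℝ) + bump N j with hy_def
    have hynorm : ‖y‖ ≤ 1 := by
      rw [ContinuousMap.norm_le _ (by norm_num)]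
      intro t
      have h1 := bump_nonpos N j t
      have h2 := bump_ge N j t
      simp only [hy_def, ContinuousMap.add_apply, ContinuousMap.const_apply,
        Real.norm_eq_abs]
      rw [abs_le]; constructor <;> linarith
    have hweak : ∀ f ∈ s, |f y - f (ContinuousMap.const (Set.Icc (0:ℝ) 1) (1 : ℝ))| < δ := by
      intro f hf
      have : f y - f (ContinuousMap.const (Set.Icc (0:ℝ) 1) (1 : ℝ)) = f (bump N j) := by
        rw [hy_def, map_add]; ring
      rw [this]
      exact hj f hf
    have := hy y hynorm hweak
    have hdiff : y - ContinuousMap.const (Set.Icc (0:ℝ) 1) (1 : ℝ) = bump N j := by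
      rw [hy_def]; ring
    rw [hdiff] at this
    -- but ‖bump N j‖ = 2
    have hc : ((2*j+1)/(2*N) : ℝ) ∈ Set.Icc (0:ℝ) 1 := by
      constructor
      · positivity
      · rw [div_le_one (by positivity)]
        have : (j:ℝ) + 1 ≤ N := by exact_mod_cast hjN
        linarith
    have hval : bump N j ⟨_, hc⟩ = -2 := by
      rw [bump_apply]
      simp
    have : (2:ℝ) ≤ 1 := by
      calc (2:ℝ) = ‖bump N j ⟨_, hc⟩‖ := by rw [hval]; norm_num
        _ ≤ ‖bump N j‖ := (bump N j).norm_coe_le_norm _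
        _ ≤ 1 := this
    linarith
end

section
/- Let X be a Banach space, e ∈ B_X, e* ∈ S_{X*} with e*(e) = ‖e‖ = ‖e*‖ = 1, and define P x = e*(x)e, R = I − P. If the norm of X is strictly convex, then sup{‖Py − Ry‖ : ‖y‖ ≤ 1, P(e − y) = 0} = 1. -/
open Filter Topology

/-- Remark 2.6 (strictly convex case): with `P y = e*(y) e` and `R = I − P`,
`sup{‖Py − Ry‖ : ‖y‖ ≤ 1, P(e − y) = 0} = 1`. -/
theorem stmt10 {X : Type*} [NormedAddCommGroup X] [NormedSpace ℝ X] [CompleteSpace X]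
    (e : X) (f : X →L[ℝ] ℝ) (he : ‖e‖ = 1) (hf : ‖f‖ = 1) (hfe : f e = 1)
    (hsc : ∀ u v : X, ‖u‖ = 1 → ‖v‖ = 1 → u ≠ v → ‖(1/2 : ℝ) • (u + v)‖ < 1) :
    sSup {r : ℝ | ∃ y : X, ‖y‖ ≤ 1 ∧ f (e - y) • e = 0 ∧
      r = ‖f y • e - (y - f y • e)‖} = 1 := by
  have hene : e ≠ 0 := by
    intro h; rw [h, norm_zero] at he; norm_num at he
  have hset : {r : ℝ | ∃ y : X, ‖y‖ ≤ 1 ∧ f (e - y) • e = 0 ∧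
      r = ‖f y • e - (y - f y • e)‖} = {1} := by
    ext r
    simp only [Set.mem_setOf_eq, Set.mem_singleton_iff]
    constructor
    · rintro ⟨y, hy, h0, hr⟩
      have hfy : f y = 1 := by
        rcases smul_eq_zero.mp h0 with h | h
        · have : f e - f y = 0 := by simpa [map_sub] using h
          linarith [hfe ▸ this]
        · exact absurd h hene
      have hyn : ‖y‖ = 1 := by
        have h1 : (1 : ℝ) ≤ ‖y‖ := by
          calc (1 : ℝ) = f y := hfy.symm
            _ ≤ ‖f y‖ := le_abs_self _
            _ ≤ ‖f‖ * ‖y‖ := f.le_opNorm y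
            _ = ‖y‖ := by rw [hf, one_mul]
        linarith
      have hye : y = e := by
        by_contra hne
        have hlt := hsc e y he hyn (fun h => hne h.symm)
        have : (1 : ℝ) ≤ ‖(1/2 : ℝ) • (e + y)‖ := by
          calc (1 : ℝ) = f ((1/2 : ℝ) • (e + y)) := by
                simp [map_add, hfe, hfy]; ring
            _ ≤ ‖f ((1/2 : ℝ) • (e + y))‖ := le_abs_self _
            _ ≤ ‖f‖ * ‖(1/2 : ℝ) • (e + y)‖ := f.le_opNorm _
            _ = ‖(1/2 : ℝ) • (e + y)‖ := by rw [hf, one_mul]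
        linarith
      rw [hr, hye, hfe, one_smul]
      simpa using he
    · rintro rfl
      exact ⟨e, le_of_eq he, by simp, by simp [hfe, he]⟩
  rw [hset, csSup_singleton]
end

section
/- Let X be a Banach space with a Schauder basis whose basis projections P_n satisfy ‖I − 2P_n‖ = 1 for all n (unconditional basis with unconditional constant 1). Then every strongly extreme point of B_X is denting. -/
open Filter Topology

set_option maxHeartbeats 4000000 in
/-- If `X` has a Schauder basis whose projections `P n` satisfy `‖I − 2 P n‖ = 1`
(unconditional basis with unconditional constant 1), then every strongly extreme
point of the unit ball is denting. -/
theorem stmt12 {X : Type*} [NormedAddCommGroup X] [NormedSpace ℝ X] [CompleteSpace X]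
    (P : ℕ → X →L[ℝ] X)
    (hfin : ∀ n, FiniteDimensional ℝ (LinearMap.range (P n).toLinearMap))
    (hrank : ∀ n, Module.finrank ℝ (LinearMap.range (P n).toLinearMap) = n)
    (hcomp : ∀ n m, (P n).comp (P m) = P (min n m))
    (happrox : ∀ x : X, Tendsto (fun n => ‖P n x - x‖) atTop (nhds 0))
    (hnorm : ∀ n, ‖ContinuousLinearMap.id ℝ X - 2 • P n‖ = 1)
    (x : X) (hx : ‖x‖ ≤ 1)
    (hse : ∀ u : ℕ → X,
      Tendsto (fun n => ‖x + u n‖) atTop (nhds 1) →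
      Tendsto (fun n => ‖x - u n‖) atTop (nhds 1) →
      Tendsto (fun n => ‖u n‖) atTop (nhds 0)) :
    ∀ ε > (0 : ℝ), ∃ (f : X →L[ℝ] ℝ) (δ : ℝ), f ≠ 0 ∧ 0 < δ ∧
      x ∈ {y : X | ‖y‖ ≤ 1 ∧ sSup (f '' {w : X | ‖w‖ ≤ 1}) - δ < f y} ∧
      ∀ y ∈ {y : X | ‖y‖ ≤ 1 ∧ sSup (f '' {w : X | ‖w‖ ≤ 1}) - δ < f y},
        ∀ z ∈ {y : X | ‖y‖ ≤ 1 ∧ sSup (f '' {w : X | ‖w‖ ≤ 1}) - δ < f y},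
          ‖y - z‖ < ε := by
  -- Basic facts about the projections
  have hPP : ∀ (n : ℕ) (y : X), P n (P n y) = P n y := by
    intro n y
    have h := congrFun (congrArg (DFunLike.coe) (hcomp n n)) y
    simpa [min_self] using h
  have hTapp : ∀ (n : ℕ) (y : X),
      (ContinuousLinearMap.id ℝ X - 2 • P n) y = y - (P n y + P n y) := by
    intro n y
    simp [ContinuousLinearMap.sub_apply, two_smul]
  have hTle : ∀ (n : ℕ) (y : X), ‖y - (P n y + P n y)‖ ≤ ‖y‖ := by
    intro n y
    calc ‖y - (P n y + P n y)‖ = ‖(ContinuousLinearMap.id ℝ X - 2 • P n) y‖ := by rw [hTapp]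
    _ ≤ ‖ContinuousLinearMap.id ℝ X - 2 • P n‖ * ‖y‖ :=
        ContinuousLinearMap.le_opNorm _ _
    _ = ‖y‖ := by rw [hnorm n, one_mul]
  have hTiso : ∀ (n : ℕ) (y : X), ‖y - (P n y + P n y)‖ = ‖y‖ := by
    intro n y
    refine le_antisymm (hTle n y) ?_
    have hTT : (y - (P n y + P n y)) - (P n (y - (P n y + P n y)) + P n (y - (P n y + P n y))) = y := by
      simp only [map_sub, map_add, hPP]
      abel
    calc ‖y‖ = ‖(y - (P n y + P n y)) - (P n (y - (P n y + P n y)) + P n (y - (P n y + P n y)))‖ := by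
          rw [hTT]
    _ ≤ ‖y - (P n y + P n y)‖ := hTle n _
  have hP1 : ∀ (n : ℕ) (y : X), ‖P n y‖ ≤ ‖y‖ := by
    intro n y
    have h1 : P n y + P n y = y - (y - (P n y + P n y)) := by abel
    have h2 : ‖P n y + P n y‖ ≤ ‖y‖ + ‖y - (P n y + P n y)‖ := by
      have := norm_sub_le y (y - (P n y + P n y))
      rw [← h1] at this
      exact this
    have h3 : ‖P n y + P n y‖ = 2 * ‖P n y‖ := by
      rw [← two_smul ℝ (P n y), norm_smul]; norm_num
    rw [hTiso n y] at h2
    rw [h3] at h2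
    linarith
  have hRefl : ∀ (n : ℕ) (y : X), ‖(P n y + P n y) - y‖ = ‖y‖ := by
    intro n y
    rw [← norm_neg]
    simpa [neg_sub] using hTiso n y
  -- nontriviality
  have hnontriv : ∃ v : X, v ≠ 0 := by
    by_contra hc
    push_neg at hc
    have hz : (ContinuousLinearMap.id ℝ X - 2 • P 0) = 0 := by
      ext v
      simp [hc v]
    have := hnorm 0
    rw [hz] at this
    simp at this
  -- a vector not colinear with a given nonzero vector
  have hdim : ∀ x' : X, x' ≠ 0 → ∃ w : X, ∀ c : ℝ, w ≠ c • x' := by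
    intro x' hx'
    by_contra hc
    push_neg at hc
    have hle : LinearMap.range (P 2).toLinearMap ≤ Submodule.span ℝ {x'} := by
      intro z _
      obtain ⟨c, hcz⟩ := hc z
      exact Submodule.mem_span_singleton.mpr ⟨c, hcz.symm⟩
    haveI : FiniteDimensional ℝ (Submodule.span ℝ ({x'} : Set X)) := by
      apply FiniteDimensional.span_of_finite
      exact Set.finite_singleton _
    have h2 := Submodule.finrank_mono hle
    rw [hrank 2, finrank_span_singleton hx'] at h2
    omega
  -- norm of x is 1
  have hx1 : ‖x‖ = 1 := by
    by_contra hne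
    have hxlt : ‖x‖ < 1 := lt_of_le_of_ne hx hne
    rcases eq_or_ne x 0 with h0 | h0
    · obtain ⟨v, hv⟩ := hnontriv
      set u : X := ‖v‖⁻¹ • v with hu
      have hu1 : ‖u‖ = 1 := by
        rw [hu, norm_smul, norm_inv, norm_norm, inv_mul_cancel₀ (norm_ne_zero_iff.mpr hv)]
      have h1 : Tendsto (fun _ : ℕ => ‖x + u‖) atTop (nhds 1) := by
        have : ‖x + u‖ = 1 := by rw [h0, zero_add, hu1]
        rw [this]; exact tendsto_const_nhds
      have h2 : Tendsto (fun _ : ℕ => ‖x - u‖) atTop (nhds 1) := by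
        have : ‖x - u‖ = 1 := by rw [h0, zero_sub, norm_neg, hu1]
        rw [this]; exact tendsto_const_nhds
      have h3 := hse (fun _ => u) h1 h2
      have h4 : Tendsto (fun _ : ℕ => ‖u‖) atTop (nhds ‖u‖) := tendsto_const_nhds
      have := tendsto_nhds_unique h3 h4
      rw [hu1] at this; norm_num at this
    · -- x ≠ 0, 0 < ‖x‖ < 1
      have hxpos : 0 < ‖x‖ := norm_pos_iff.mpr h0
      obtain ⟨w, hw⟩ := hdim x h0
      set a : X := ‖x‖⁻¹ • x with ha
      have ha1 : ‖a‖ = 1 := by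
        rw [ha, norm_smul, norm_inv, norm_norm, inv_mul_cancel₀ (ne_of_gt hxpos)]
      set wf : ℝ → X := fun t => (1 - 2*t) • a + (t*(1-t)) • w with hwf
      have hwfne : ∀ t : ℝ, wf t ≠ 0 := by
        intro t hzero
        rcases eq_or_ne (t*(1-t)) 0 with hs | hs
        · rw [hwf] at hzero
          simp only [hs, zero_smul, add_zero] at hzero
          have h2t : (1 - 2*t) ≠ 0 := by
            rcases mul_eq_zero.mp hs with h | h
            · rw [h]; norm_num
            · have : t = 1 := by linarith
              rw [this]; norm_num
          have : a = 0 := by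
            have := smul_eq_zero.mp hzero
            tauto
          rw [ha] at this
          have := smul_eq_zero.mp this
          rcases this with h | h
          · exact (inv_ne_zero (ne_of_gt hxpos)) h
          · exact h0 h
        · -- w is a multiple of x : contradiction
          rw [hwf] at hzero
          have h1 : (t*(1-t)) • w = -((1 - 2*t) • a) := by
            rw [← add_eq_zero_iff_eq_neg]
            linear_combination (norm := module) hzero
          have h2 : w = (-((t*(1-t))⁻¹ * ((1 - 2*t) * ‖x‖⁻¹))) • x := by
            have h3 : w = (t*(1-t))⁻¹ • ((t*(1-t)) • w) := by
              rw [smul_smul, inv_mul_cancel₀ hs, one_smul]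
            rw [h3, h1, ha]; module
          exact hw _ h2
      have hwfc : Continuous wf := by
        rw [hwf]; fun_prop
      set z : ℝ → X := fun t => ‖wf t‖⁻¹ • wf t with hz
      have hzc : Continuous z := by
        rw [hz]
        exact (hwfc.norm.inv₀ (fun t => norm_ne_zero_iff.mpr (hwfne t))).smul hwfc
      have hz1 : ∀ t, ‖z t‖ = 1 := by
        intro t
        rw [hz]
        simp only
        rw [norm_smul, norm_inv, norm_norm,
          inv_mul_cancel₀ (norm_ne_zero_iff.mpr (hwfne t))]
      set φ : ℝ → ℝ := fun t => ‖z t - ((2:ℝ) • x)‖ with hφ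
      have hφc : Continuous φ := by
        rw [hφ]; exact (hzc.sub continuous_const).norm
      have hz0 : z 0 = a := by
        have : wf 0 = a := by rw [hwf]; module
        rw [hz]; simp only [this, ha1]; norm_num
      have hz1' : z 1 = -a := by
        have : wf 1 = -a := by rw [hwf]; module
        rw [hz]; simp only [this, norm_neg, ha1]; norm_num
      have hφ0 : φ 0 = |1 - 2*‖x‖| := by
        rw [hφ]; simp only [hz0]
        have : a - (2:ℝ) • x = (‖x‖⁻¹ - 2) • x := by rw [ha, sub_smul]
        rw [this, norm_smul, Real.norm_eq_abs]
        rw [show |‖x‖⁻¹ - 2| * ‖x‖ = |(‖x‖⁻¹ - 2) * ‖x‖| by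
          rw [abs_mul, abs_of_nonneg (norm_nonneg x)]]
        congr 1
        field_simp
      have hφ1 : φ 1 = 1 + 2*‖x‖ := by
        rw [hφ]; simp only [hz1']
        have : -a - (2:ℝ) • x = -((‖x‖⁻¹ + 2) • x) := by rw [ha, add_smul]; module
        rw [this, norm_neg, norm_smul, Real.norm_eq_abs]
        rw [abs_of_pos (by positivity)]
        field_simp
      have hmem : (1:ℝ) ∈ Set.Icc (φ 0) (φ 1) := by
        constructor
        · rw [hφ0]
          rw [abs_le]; constructor <;> linarith
        · rw [hφ1]; linarith
      obtain ⟨t₀, _, ht₀⟩ := intermediate_value_Icc (by norm_num : (0:ℝ) ≤ 1) hφc.continuousOn hmem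
      set u : X := x - z t₀ with hudef
      have hxu1 : ‖x - u‖ = 1 := by
        rw [hudef]; simp only [sub_sub_cancel]; exact hz1 t₀
      have hxu2 : ‖x + u‖ = 1 := by
        have : x + u = -(z t₀ - (2:ℝ) • x) := by rw [hudef]; module
        rw [this, norm_neg]
        exact ht₀
      have h1 : Tendsto (fun _ : ℕ => ‖x + u‖) atTop (nhds 1) := by
        rw [hxu2]; exact tendsto_const_nhds
      have h2 : Tendsto (fun _ : ℕ => ‖x - u‖) atTop (nhds 1) := by
        rw [hxu1]; exact tendsto_const_nhds
      have h3 := hse (fun _ => u) h1 h2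
      have h4' : Tendsto (fun _ : ℕ => ‖u‖) atTop (nhds ‖u‖) := tendsto_const_nhds
      have h4 := tendsto_nhds_unique h3 h4'
      have h5 : ‖u‖ ≥ 1 - ‖x‖ := by
        have : ‖u‖ = ‖z t₀ - x‖ := by rw [hudef, norm_sub_rev]
        rw [this]
        have := norm_sub_norm_le (z t₀) x
        rw [hz1 t₀] at this
        linarith
      rw [← h4] at h5
      linarith
  -- quantitative modulus of strong extremity
  have hq : ∀ e : ℝ, 0 < e → ∃ δ : ℝ, 0 < δ ∧
      ∀ u : X, ‖x + u‖ ≤ 1 + δ → ‖x - u‖ ≤ 1 + δ → ‖u‖ ≤ e := by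
    intro e he
    by_contra hc
    push_neg at hc
    have hsel : ∀ n : ℕ, ∃ u : X, ‖x + u‖ ≤ 1 + 1/((n:ℝ)+1) ∧ ‖x - u‖ ≤ 1 + 1/((n:ℝ)+1) ∧ e < ‖u‖ := by
      intro n
      obtain ⟨u, h1, h2, h3⟩ := hc (1/((n:ℝ)+1)) (by positivity)
      exact ⟨u, h1, h2, h3⟩
    choose u hu1 hu2 hu3 using hsel
    have hlow : ∀ (v : X) (n : ℕ), ‖x - v‖ ≤ 1 + 1/((n:ℝ)+1) → 1 - 1/((n:ℝ)+1) ≤ ‖x + v‖ := by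
      intro v n hv
      have hsum : (x + v) + (x - v) = (2:ℝ) • x := by module
      have h2 : ‖(x+v) + (x-v)‖ = 2 := by
        rw [hsum, norm_smul, hx1]; norm_num
      have := norm_add_le (x+v) (x-v)
      rw [h2] at this
      linarith
    have htend : Tendsto (fun n : ℕ => 1/((n:ℝ)+1)) atTop (nhds 0) :=
      tendsto_one_div_add_atTop_nhds_zero_nat
    have hlim1 : Tendsto (fun n => ‖x + u n‖) atTop (nhds 1) := by
      apply tendsto_of_tendsto_of_tendsto_of_le_of_le
        (g := fun n : ℕ => 1 - 1/((n:ℝ)+1)) (h := fun n : ℕ => 1 + 1/((n:ℝ)+1))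
      · simpa using (tendsto_const_nhds (x := (1:ℝ))).sub htend
      · simpa using (tendsto_const_nhds (x := (1:ℝ))).add htend
      · intro n; exact hlow (u n) n (hu2 n)
      · intro n; exact hu1 n
    have hlim2 : Tendsto (fun n => ‖x - u n‖) atTop (nhds 1) := by
      apply tendsto_of_tendsto_of_tendsto_of_le_of_le
        (g := fun n : ℕ => 1 - 1/((n:ℝ)+1)) (h := fun n : ℕ => 1 + 1/((n:ℝ)+1))
      · simpa using (tendsto_const_nhds (x := (1:ℝ))).sub htend
      · simpa using (tendsto_const_nhds (x := (1:ℝ))).add htend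
      · intro n
        have := hlow (-(u n)) n (by simpa [sub_neg_eq_add] using hu1 n)
        simpa [sub_eq_add_neg] using this
      · intro n; exact hu2 n
    have h3 := hse u hlim1 hlim2
    have h4 : e ≤ 0 := ge_of_tendsto h3 (Eventually.of_forall (fun n => (hu3 n).le))
    linarith

  -- MAIN ARGUMENT
  intro ε hε
  classical
  set r : ℝ := ε/2 with hr
  have hrpos : 0 < r := by positivity
  obtain ⟨δ₀, hδ₀, hmod₀⟩ := hq (r/4) (by positivity)
  set ρ : ℝ := min (δ₀/2) (r/2) with hρ
  have hρpos : 0 < ρ := lt_min (by linarith) (by linarith)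
  have hρδ : ρ ≤ δ₀/2 := min_le_left _ _
  have hρr : ρ ≤ r/2 := min_le_right _ _
  obtain ⟨n, hn⟩ : ∃ n : ℕ, ‖P n x - x‖ ≤ min (δ₀/2) (r/8) := by
    have hpos : (0:ℝ) < min (δ₀/2) (r/8) := lt_min (by linarith) (by positivity)
    exact ((happrox x).eventually (eventually_le_nhds hpos)).exists
  have hη1 : ‖x - P n x‖ ≤ δ₀/2 := by
    rw [norm_sub_rev]; exact le_trans hn (min_le_left _ _)
  have hη2 : ‖x - P n x‖ ≤ r/8 := by
    rw [norm_sub_rev]; exact le_trans hn (min_le_right _ _)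
  -- Claim A : far points have far heads
  have claimA : ∀ y : X, ‖y‖ ≤ 1 → r ≤ ‖y - x‖ → ρ ≤ ‖P n (y - x)‖ := by
    intro y hy1 hyr
    by_contra hlt
    push_neg at hlt
    have hPxy : ‖P n x - P n y‖ < ρ := by
      have h : P n x - P n y = -(P n (y - x)) := by rw [map_sub]; abel
      rw [h, norm_neg]; exact hlt
    have h1 : ‖x + (y - P n y)‖ ≤ 1 + δ₀ := by
      have heq : x + (y - P n y) = ((x - P n x) + (P n x - P n y)) + y := by abel
      calc ‖x + (y - P n y)‖ = ‖((x - P n x) + (P n x - P n y)) + y‖ := by rw [heq]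
      _ ≤ ‖(x - P n x) + (P n x - P n y)‖ + ‖y‖ := norm_add_le _ _
      _ ≤ (‖x - P n x‖ + ‖P n x - P n y‖) + ‖y‖ := by
            linarith [norm_add_le (x - P n x) (P n x - P n y)]
      _ ≤ (δ₀/2 + ρ) + 1 := by
            have := hPxy.le
            linarith
      _ ≤ 1 + δ₀ := by linarith
    have h2 : ‖x - (y - P n y)‖ ≤ 1 + δ₀ := by
      have heq : x - (y - P n y) = ((x - P n x) + (P n x - P n y)) + (P n y + P n y - y) := by
        abel
      calc ‖x - (y - P n y)‖ = ‖((x - P n x) + (P n x - P n y)) + (P n y + P n y - y)‖ := by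
            rw [heq]
      _ ≤ ‖(x - P n x) + (P n x - P n y)‖ + ‖P n y + P n y - y‖ := norm_add_le _ _
      _ ≤ (‖x - P n x‖ + ‖P n x - P n y‖) + ‖y‖ := by
            rw [hRefl n y]
            linarith [norm_add_le (x - P n x) (P n x - P n y)]
      _ ≤ (δ₀/2 + ρ) + 1 := by
            have := hPxy.le
            linarith
      _ ≤ 1 + δ₀ := by linarith
    have hv : ‖y - P n y‖ ≤ r/4 := hmod₀ (y - P n y) h1 h2
    have hdec : y - x = P n (y - x) + ((y - P n y) - (x - P n x)) := by
      rw [map_sub]; abel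
    have : ‖y - x‖ ≤ ‖P n (y - x)‖ + (‖y - P n y‖ + ‖x - P n x‖) := by
      calc ‖y - x‖ = ‖P n (y - x) + ((y - P n y) - (x - P n x))‖ := by rw [← hdec]
      _ ≤ ‖P n (y - x)‖ + ‖(y - P n y) - (x - P n x)‖ := norm_add_le _ _
      _ ≤ ‖P n (y - x)‖ + (‖y - P n y‖ + ‖x - P n x‖) := by
            linarith [norm_sub_le (y - P n y) (x - P n x)]
    linarith
  -- finite net for the heads
  haveI := hfin n
  set S : Set X := Subtype.val '' (Metric.closedBall (0 : LinearMap.range (P n).toLinearMap) 1)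
    with hS
  have hcpt : IsCompact S := (isCompact_closedBall _ _).image continuous_subtype_val
  have hheads : ∀ y : X, ‖y‖ ≤ 1 → P n y ∈ S := by
    intro y hy
    refine ⟨⟨P n y, LinearMap.mem_range.mpr ⟨y, rfl⟩⟩, ?_, rfl⟩
    rw [Metric.mem_closedBall, dist_zero_right]
    show ‖P n y‖ ≤ 1
    exact (hP1 n y).trans hy
  obtain ⟨net, hnetfin, hnetcov⟩ :=
    (Metric.totallyBounded_iff.mp hcpt.totallyBounded) (ρ/8) (by positivity)
  set Nset : Finset X := hnetfin.toFinset with hNset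
  set k : ℕ := Nset.card with hk
  obtain ⟨δ₁, hδ₁, hmod₁⟩ := hq (ρ/(4*((k:ℝ)+1))) (by positivity)
  set δ : ℝ := min δ₁ (ρ/4) with hδ
  have hδpos : 0 < δ := lt_min hδ₁ (by positivity)
  have hδρ : δ ≤ ρ/4 := min_le_right _ _
  have hδδ₁ : δ ≤ δ₁ := min_le_left _ _
  set D : Set X := {y : X | ‖y‖ ≤ 1 ∧ r ≤ ‖y - x‖} with hD
  -- the gap between x and the convex hull of D
  have hgap : ∀ c ∈ convexHull ℝ D, δ < ‖c - x‖ := by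
    intro c hc
    by_contra hcx
    push_neg at hcx
    rw [convexHull_eq] at hc
    obtain ⟨ι, t, w, p, hw0, hw1, hpD, hcm⟩ := hc
    rw [Finset.centerMass_eq_of_sum_1 _ _ hw1] at hcm
    have hxc : ‖x - c‖ ≤ δ := by rw [norm_sub_rev]; exact hcx
    -- assign a net point to each index
    have hassign : ∀ i : ι, ∃ ν : X, i ∈ t → (ν ∈ Nset ∧ ‖P n (p i) - ν‖ < ρ/8) := by
      intro i
      by_cases hi : i ∈ t
      · have hyS : P n (p i) ∈ S := hheads (p i) (hpD i hi).1
        have hmem := hnetcov hyS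
        rw [Set.mem_iUnion₂] at hmem
        obtain ⟨ν, hν1, hν2⟩ := hmem
        refine ⟨ν, fun _ => ⟨?_, ?_⟩⟩
        · rw [hNset]; exact hnetfin.mem_toFinset.mpr hν1
        · rw [← dist_eq_norm]; exact hν2
      · exact ⟨x, fun h => absurd h hi⟩
    choose g hg using hassign
    have hmaps : ∀ i ∈ t, g i ∈ Nset := fun i hi => (hg i hi).1
    have hcnorm : ‖c‖ ≤ 1 := by
      rw [← hcm]
      calc ‖∑ i ∈ t, w i • p i‖ ≤ ∑ i ∈ t, ‖w i • p i‖ := norm_sum_le _ _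
      _ ≤ ∑ i ∈ t, w i := by
          apply Finset.sum_le_sum
          intro i hi
          rw [norm_smul, Real.norm_eq_abs, abs_of_nonneg (hw0 i hi)]
          calc w i * ‖p i‖ ≤ w i * 1 :=
                mul_le_mul_of_nonneg_left (hpD i hi).1 (hw0 i hi)
          _ = w i := mul_one _
      _ = 1 := hw1
    -- the key coefficient bound
    have key : ∀ ν ∈ Nset, (∑ i ∈ t.filter (fun i => g i = ν), w i) ≤ 1/(2*((k:ℝ)+1)) := by
      intro ν hν
      set A : Finset ι := t.filter (fun i => g i = ν) with hA
      set μ : ℝ := ∑ i ∈ A, w i with hμ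
      rcases Finset.eq_empty_or_nonempty A with hAe | hAne
      · rw [hμ, hAe, Finset.sum_empty]
        positivity
      · obtain ⟨i₀, hi₀⟩ := hAne
        have hAsub : A ⊆ t := Finset.filter_subset _ _
        have hμ0 : 0 ≤ μ := Finset.sum_nonneg (fun i hi => hw0 i (hAsub hi))
        have hμ1 : μ ≤ 1 := by
          rw [hμ, ← hw1]
          exact Finset.sum_le_sum_of_subset_of_nonneg hAsub (fun i hi _ => hw0 i hi)
        set SA : X := ∑ i ∈ A, w i • p i with hSA
        have hSAn : ‖SA‖ ≤ μ := by
          rw [hSA, hμ]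
          calc ‖∑ i ∈ A, w i • p i‖ ≤ ∑ i ∈ A, ‖w i • p i‖ := norm_sum_le _ _
          _ ≤ ∑ i ∈ A, w i := by
              apply Finset.sum_le_sum
              intro i hi
              rw [norm_smul, Real.norm_eq_abs, abs_of_nonneg (hw0 i (hAsub hi))]
              calc w i * ‖p i‖ ≤ w i * 1 :=
                    mul_le_mul_of_nonneg_left (hpD i (hAsub hi)).1 (hw0 i (hAsub hi))
              _ = w i := mul_one _
        set d : X := SA - μ • c with hd
        have hcd1 : ‖c + d‖ ≤ 1 := by
          have he : c + d = SA + (1 - μ) • c := by rw [hd]; module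
          rw [he]
          calc ‖SA + (1-μ) • c‖ ≤ ‖SA‖ + ‖(1-μ) • c‖ := norm_add_le _ _
          _ ≤ μ + (1-μ) * 1 := by
              rw [norm_smul, Real.norm_eq_abs, abs_of_nonneg (by linarith : (0:ℝ) ≤ 1 - μ)]
              have h3 := mul_le_mul_of_nonneg_left hcnorm (by linarith : (0:ℝ) ≤ 1-μ)
              linarith
          _ = 1 := by ring
        have hsd : ∑ i ∈ t \ A, w i • p i = c - SA := by
          have h4 := Finset.sum_sdiff (f := fun i => w i • p i) hAsub
          rw [hcm] at h4
          rw [← hSA] at h4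
          exact eq_sub_of_add_eq h4
        have hsdw : ∑ i ∈ t \ A, w i = 1 - μ := by
          have h4 := Finset.sum_sdiff (f := w) hAsub
          rw [hw1, ← hμ] at h4
          linarith
        have hcd2 : ‖c - d‖ ≤ 1 := by
          have he : c - d = (∑ i ∈ t \ A, w i • p i) + μ • c := by
            rw [hd, hsd]; module
          rw [he]
          calc ‖(∑ i ∈ t \ A, w i • p i) + μ • c‖
              ≤ ‖∑ i ∈ t \ A, w i • p i‖ + ‖μ • c‖ := norm_add_le _ _
          _ ≤ (1 - μ) + μ * 1 := by
              have hb1 : ‖∑ i ∈ t \ A, w i • p i‖ ≤ 1 - μ := by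
                rw [← hsdw]
                calc ‖∑ i ∈ t \ A, w i • p i‖ ≤ ∑ i ∈ t \ A, ‖w i • p i‖ := norm_sum_le _ _
                _ ≤ ∑ i ∈ t \ A, w i := by
                    apply Finset.sum_le_sum
                    intro i hi
                    have hit : i ∈ t := (Finset.mem_sdiff.mp hi).1
                    rw [norm_smul, Real.norm_eq_abs, abs_of_nonneg (hw0 i hit)]
                    calc w i * ‖p i‖ ≤ w i * 1 :=
                          mul_le_mul_of_nonneg_left (hpD i hit).1 (hw0 i hit)
                    _ = w i := mul_one _
              have hb2 : ‖μ • c‖ ≤ μ * 1 := by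
                rw [norm_smul, Real.norm_eq_abs, abs_of_nonneg hμ0]
                exact mul_le_mul_of_nonneg_left hcnorm hμ0
              linarith
          _ = 1 := by ring
        have hxd1 : ‖x + d‖ ≤ 1 + δ₁ := by
          have he : x + d = (x - c) + (c + d) := by abel
          calc ‖x + d‖ = ‖(x - c) + (c + d)‖ := by rw [← he]
          _ ≤ ‖x - c‖ + ‖c + d‖ := norm_add_le _ _
          _ ≤ δ + 1 := add_le_add hxc hcd1
          _ ≤ 1 + δ₁ := by linarith
        have hxd2 : ‖x - d‖ ≤ 1 + δ₁ := by
          have he : x - d = (x - c) + (c - d) := by abel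
          calc ‖x - d‖ = ‖(x - c) + (c - d)‖ := by rw [← he]
          _ ≤ ‖x - c‖ + ‖c - d‖ := norm_add_le _ _
          _ ≤ δ + 1 := add_le_add hxc hcd2
          _ ≤ 1 + δ₁ := by linarith
        have hdsmall : ‖d‖ ≤ ρ/(4*((k:ℝ)+1)) := hmod₁ d hxd1 hxd2
        -- lower bound on ‖P n d‖
        have hPd : P n d = (∑ i ∈ A, w i • (P n (p i) - ν)) + μ • (ν - P n x)
            + μ • (P n x - P n c) := by
          have h1 : P n d = (∑ i ∈ A, w i • P n (p i)) - μ • P n c := by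
            rw [hd, map_sub, map_smul, map_sum]
            congr 1
            refine Finset.sum_congr rfl (fun i _ => ?_)
            rw [map_smul]
          have h2 : ∑ i ∈ A, w i • (P n (p i) - ν)
              = (∑ i ∈ A, w i • P n (p i)) - μ • ν := by
            rw [hμ]
            rw [Finset.sum_smul]
            rw [← Finset.sum_sub_distrib]
            refine Finset.sum_congr rfl (fun i _ => ?_)
            rw [smul_sub]
          rw [h1, h2]
          module
        have n1 : ‖∑ i ∈ A, w i • (P n (p i) - ν)‖ ≤ μ * (ρ/8) := by
          calc ‖∑ i ∈ A, w i • (P n (p i) - ν)‖ ≤ ∑ i ∈ A, ‖w i • (P n (p i) - ν)‖ :=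
                norm_sum_le _ _
          _ ≤ ∑ i ∈ A, w i * (ρ/8) := by
              apply Finset.sum_le_sum
              intro i hi
              have hit : i ∈ t := hAsub hi
              have hgi : g i = ν := (Finset.mem_filter.mp hi).2
              have hnear : ‖P n (p i) - ν‖ ≤ ρ/8 := by
                rw [← hgi]; exact ((hg i hit).2).le
              rw [norm_smul, Real.norm_eq_abs, abs_of_nonneg (hw0 i hit)]
              exact mul_le_mul_of_nonneg_left hnear (hw0 i hit)
          _ = μ * (ρ/8) := by rw [← Finset.sum_mul, ← hμ]
        have n2 : ρ - ρ/8 ≤ ‖ν - P n x‖ := by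
          have hit : i₀ ∈ t := hAsub hi₀
          have hfar := claimA (p i₀) (hpD i₀ hit).1 (hpD i₀ hit).2
          have hgi : g i₀ = ν := (Finset.mem_filter.mp hi₀).2
          have hnear : ‖P n (p i₀) - ν‖ ≤ ρ/8 := by
            rw [← hgi]; exact ((hg i₀ hit).2).le
          have hdec : P n (p i₀ - x) = (P n (p i₀) - ν) + (ν - P n x) := by
            rw [map_sub]; abel
          have h5 : ‖P n (p i₀ - x)‖ ≤ ‖P n (p i₀) - ν‖ + ‖ν - P n x‖ := by
            rw [hdec]; exact norm_add_le _ _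
          linarith
        have n3 : ‖P n x - P n c‖ ≤ δ := by
          have h6 : P n x - P n c = P n (x - c) := by rw [map_sub]
          rw [h6]
          exact (hP1 n _).trans hxc
        have hlow : μ * (ρ/2) ≤ ‖P n d‖ := by
          have hb : ‖μ • (ν - P n x)‖ = μ * ‖ν - P n x‖ := by
            rw [norm_smul, Real.norm_eq_abs, abs_of_nonneg hμ0]
          have hdec2 : μ • (ν - P n x) = P n d - (∑ i ∈ A, w i • (P n (p i) - ν))
              - μ • (P n x - P n c) := by
            rw [hPd]; abel
          have hb2 : ‖μ • (ν - P n x)‖ ≤ ‖P n d‖ + ‖∑ i ∈ A, w i • (P n (p i) - ν)‖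
              + ‖μ • (P n x - P n c)‖ := by
            rw [hdec2]
            calc ‖P n d - (∑ i ∈ A, w i • (P n (p i) - ν)) - μ • (P n x - P n c)‖
                ≤ ‖P n d - (∑ i ∈ A, w i • (P n (p i) - ν))‖ + ‖μ • (P n x - P n c)‖ :=
                  norm_sub_le _ _
            _ ≤ ‖P n d‖ + ‖∑ i ∈ A, w i • (P n (p i) - ν)‖ + ‖μ • (P n x - P n c)‖ := by
                  linarith [norm_sub_le (P n d) (∑ i ∈ A, w i • (P n (p i) - ν))]
          have hb3 : ‖μ • (P n x - P n c)‖ ≤ μ * δ := by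
            rw [norm_smul, Real.norm_eq_abs, abs_of_nonneg hμ0]
            exact mul_le_mul_of_nonneg_left n3 hμ0
          have hb4 : μ * (ρ - ρ/8) ≤ μ * ‖ν - P n x‖ :=
            mul_le_mul_of_nonneg_left n2 hμ0
          have hb5 : μ * δ ≤ μ * (ρ/4) := mul_le_mul_of_nonneg_left hδρ hμ0
          nlinarith [hb, hb2, hb3, hb4, hb5, n1]
        have hfin2 : μ * (ρ/2) ≤ ρ/(4*((k:ℝ)+1)) :=
          le_trans hlow ((hP1 n d).trans hdsmall)
        have hkpos : (0:ℝ) < 2*((k:ℝ)+1) := by positivity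
        rw [le_div_iff₀ hkpos]
        have h7 : μ * (ρ/2) * (4*((k:ℝ)+1)) ≤ ρ/(4*((k:ℝ)+1)) * (4*((k:ℝ)+1)) :=
          mul_le_mul_of_nonneg_right hfin2 (by positivity)
        have h8 : ρ/(4*((k:ℝ)+1)) * (4*((k:ℝ)+1)) = ρ := by field_simp
        have h9 : μ * (ρ/2) * (4*((k:ℝ)+1)) = (μ * (2*((k:ℝ)+1))) * ρ := by ring
        rw [h8, h9] at h7
        have h10 : (μ * (2*((k:ℝ)+1))) * ρ ≤ 1 * ρ := by linarith
        exact le_of_mul_le_mul_right (by linarith) hρpos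
    -- summing up gives a contradiction
    have hsum := Finset.sum_fiberwise_of_maps_to hmaps w
    have hcontra : (1:ℝ) ≤ (k:ℝ) * (1/(2*((k:ℝ)+1))) := by
      have h12 : ∑ ν ∈ Nset, ∑ i ∈ t.filter (fun i => g i = ν), w i
          ≤ (k:ℝ) * (1/(2*((k:ℝ)+1))) := by
        calc ∑ ν ∈ Nset, ∑ i ∈ t.filter (fun i => g i = ν), w i
            ≤ ∑ _ν ∈ Nset, 1/(2*((k:ℝ)+1)) := Finset.sum_le_sum key
        _ = (k:ℝ) * (1/(2*((k:ℝ)+1))) := by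
            rw [Finset.sum_const, nsmul_eq_mul, hk]
      rw [hsum, hw1] at h12
      exact h12
    have hkpos : (0:ℝ) < 2*((k:ℝ)+1) := by positivity
    have h11 : (k:ℝ) * (1/(2*((k:ℝ)+1))) < 1 := by
      rw [mul_one_div, div_lt_one hkpos]
      linarith [Nat.cast_nonneg (α := ℝ) k]
    linarith
  -- x is not in the closed convex hull of D
  have hnotin : x ∉ closure (convexHull ℝ D) := by
    intro hmem
    obtain ⟨c, hcH, hcd⟩ := Metric.mem_closure_iff.mp hmem δ hδpos
    rw [dist_eq_norm, norm_sub_rev] at hcd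
    linarith [hgap c hcH]
  by_cases hDne : D.Nonempty
  · -- separation
    have hconv : Convex ℝ (closure (convexHull ℝ D)) := (convex_convexHull ℝ D).closure
    obtain ⟨f, s, hfs, hsx⟩ := geometric_hahn_banach_closed_point hconv isClosed_closure hnotin
    set M : ℝ := sSup (f '' {w : X | ‖w‖ ≤ 1}) with hM
    have hbdd : BddAbove (f '' {w : X | ‖w‖ ≤ 1}) := by
      refine ⟨‖f‖, ?_⟩
      rintro _ ⟨v, hv, rfl⟩
      calc f v ≤ |f v| := le_abs_self _
      _ = ‖f v‖ := (Real.norm_eq_abs _).symm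
      _ ≤ ‖f‖ * ‖v‖ := f.le_opNorm v
      _ ≤ ‖f‖ * 1 := mul_le_mul_of_nonneg_left hv (norm_nonneg f)
      _ = ‖f‖ := mul_one _
    have hMx : f x ≤ M := le_csSup hbdd ⟨x, hx, rfl⟩
    refine ⟨f, M - (s + f x)/2, ?_, by linarith, ⟨hx, by linarith⟩, ?_⟩
    · obtain ⟨c₀, hc₀⟩ := hDne
      have h1 : f c₀ < s := hfs c₀ (subset_closure (subset_convexHull ℝ D hc₀))
      intro h0
      rw [h0] at h1 hsx
      simp only [ContinuousLinearMap.zero_apply] at h1 hsx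
      linarith
    · intro y hy z hz
      have hnear : ∀ v : X, ‖v‖ ≤ 1 → M - (M - (s + f x)/2) < f v → ‖v - x‖ < r := by
        intro v hv1 hv2
        by_contra hvr
        push_neg at hvr
        have hvD : v ∈ D := ⟨hv1, hvr⟩
        have h2 : f v < s := hfs v (subset_closure (subset_convexHull ℝ D hvD))
        have h3 : (s + f x)/2 < f v := by linarith
        linarith
      have hy2 := hnear y hy.1 hy.2
      have hz2 := hnear z hz.1 hz.2
      have hdec : y - z = (y - x) - (z - x) := by abel
      calc ‖y - z‖ = ‖(y - x) - (z - x)‖ := by rw [← hdec]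
      _ ≤ ‖y - x‖ + ‖z - x‖ := norm_sub_le _ _
      _ < r + r := add_lt_add hy2 hz2
      _ = ε := by rw [hr]; ring
  · -- the far set is empty : trivial slice
    have hfx := exists_dual_vector ℝ x (by rw [← norm_ne_zero_iff, hx1]; norm_num)
    obtain ⟨f, hf1, hfx⟩ := hfx
    have hfx' : f x = 1 := by rw [hfx, hx1]; norm_num
    have hM : sSup (f '' {w : X | ‖w‖ ≤ 1}) ≤ 1 := by
      refine csSup_le ⟨f x, ⟨x, hx, rfl⟩⟩ ?_
      rintro _ ⟨v, hv, rfl⟩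
      calc f v ≤ |f v| := le_abs_self _
      _ = ‖f v‖ := (Real.norm_eq_abs _).symm
      _ ≤ ‖f‖ * ‖v‖ := f.le_opNorm v
      _ ≤ 1 * 1 := by
          apply mul_le_mul (le_of_eq hf1) hv (norm_nonneg v) zero_le_one
      _ = 1 := mul_one _
    refine ⟨f, 1, ?_, one_pos, ⟨hx, by linarith⟩, ?_⟩
    · intro h0
      rw [h0] at hf1
      simp at hf1
    · intro y hy z hz
      have hnear : ∀ v : X, ‖v‖ ≤ 1 → ‖v - x‖ < r := by
        intro v hv
        by_contra hvr
        push_neg at hvr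
        exact hDne ⟨v, hv, hvr⟩
      have hy2 := hnear y hy.1
      have hz2 := hnear z hz.1
      have hdec : y - z = (y - x) - (z - x) := by abel
      calc ‖y - z‖ = ‖(y - x) - (z - x)‖ := by rw [← hdec]
      _ ≤ ‖y - x‖ + ‖z - x‖ := norm_sub_le _ _
      _ < r + r := add_lt_add hy2 hz2
      _ = ε := by rw [hr]; ring
end

section
/- Let X be a Banach space, x ∈ S_X a LUR point of the norm, and (T_n) a sequence of bounded linear operators on X with ‖T_n‖ → 1 and ‖T_n x − x‖ → 0. Then for any sequence ε_n → 0+, the diameters of the sets D_n = {y ∈ B_X : ‖T_n(x − y)‖ < ε_n} tend to 0. -/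
open Filter Topology Metric

/-- If `x ∈ S_X` is a LUR point and `(T_n)` are bounded operators with `‖T_n‖ → 1` and
`‖T_n x − x‖ → 0`, then for `ε_n → 0⁺` the diameters of
`D_n = {y ∈ B_X : ‖T_n(x − y)‖ < ε_n}` tend to `0`. -/
theorem stmt13 {X : Type*} [NormedAddCommGroup X] [NormedSpace ℝ X] [CompleteSpace X]
    (x : X) (hx : ‖x‖ = 1)
    (hLUR : ∀ u : ℕ → X, (∀ n, ‖u n‖ ≤ 1) →
      Tendsto (fun n => ‖x + u n‖) atTop (nhds 2) →
      Tendsto (fun n => ‖x - u n‖) atTop (nhds 0))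
    (T : ℕ → X →L[ℝ] X)
    (hTnorm : Tendsto (fun n => ‖T n‖) atTop (nhds 1))
    (hTx : Tendsto (fun n => ‖T n x - x‖) atTop (nhds 0))
    (ε : ℕ → ℝ) (hε : ∀ n, 0 < ε n) (hε0 : Tendsto ε atTop (nhds 0)) :
    Tendsto (fun n => Metric.diam {y : X | ‖y‖ ≤ 1 ∧ ‖T n (x - y)‖ < ε n})
      atTop (nhds 0) := by
  set D : ℕ → Set X := fun n => {y : X | ‖y‖ ≤ 1 ∧ ‖T n (x - y)‖ < ε n} with hD
  have hxD : ∀ n, x ∈ D n := fun n => ⟨hx.le, by simp [hε n]⟩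
  -- any selection from D n tends to x in norm
  have key : ∀ w : ℕ → X, (∀ n, w n ∈ D n) →
      Tendsto (fun n => ‖x - w n‖) atTop (nhds 0) := by
    intro w hw
    apply hLUR w (fun n => (hw n).1)
    -- lower bound sequence
    have hnum : Tendsto (fun n => 2 - 2 * ‖T n x - x‖ - ε n) atTop (nhds 2) := by
      have := ((tendsto_const_nhds (x := (2:ℝ)) (f := atTop)).sub
        (hTx.const_mul 2)).sub hε0
      simpa using this
    have hl : Tendsto (fun n => (2 - 2 * ‖T n x - x‖ - ε n) / ‖T n‖) atTop (nhds 2) := by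
      have := hnum.div hTnorm one_ne_zero
      simpa only [div_one, Pi.div_def] using this
    have hpos : ∀ᶠ n in atTop, (0:ℝ) < ‖T n‖ :=
      hTnorm.eventually (eventually_gt_nhds (by norm_num))
    have hlow : ∀ᶠ n in atTop,
        (2 - 2 * ‖T n x - x‖ - ε n) / ‖T n‖ ≤ ‖x + w n‖ := by
      filter_upwards [hpos] with n hn
      rw [div_le_iff₀ hn]
      have h1 : ‖T n (x + w n)‖ ≤ ‖T n‖ * ‖x + w n‖ := (T n).le_opNorm _
      have heq : T n (x + w n) = (2:ℝ) • T n x - T n (x - w n) := by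
        rw [two_smul]
        simp only [map_add, map_sub]
        abel
      have h2 : ‖(2:ℝ) • T n x‖ - ‖T n (x - w n)‖ ≤ ‖T n (x + w n)‖ := by
        rw [heq]
        exact norm_sub_norm_le _ _
      have h3 : (1:ℝ) - ‖T n x - x‖ ≤ ‖T n x‖ := by
        have := norm_sub_norm_le x (T n x)
        rw [norm_sub_rev] at this
        linarith [this, hx]
      have h4 : ‖(2:ℝ) • T n x‖ = 2 * ‖T n x‖ := by
        rw [norm_smul]; simp
      have h5 := (hw n).2
      rw [mul_comm]
      nlinarith
    have hup : ∀ᶠ n in atTop, ‖x + w n‖ ≤ 2 := by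
      filter_upwards with n
      calc ‖x + w n‖ ≤ ‖x‖ + ‖w n‖ := norm_add_le _ _
        _ ≤ 1 + 1 := add_le_add hx.le (hw n).1
        _ = 2 := by norm_num
    exact tendsto_of_tendsto_of_tendsto_of_le_of_le' hl tendsto_const_nhds hlow hup
  -- choose near-diameter pairs
  have hpair : ∀ n, ∃ p ∈ D n, ∃ q ∈ D n,
      Metric.diam (D n) ≤ dist p q + 1 / (n + 1) := by
    intro n
    by_contra h
    push_neg at h
    have hpos : (0:ℝ) < 1 / (n + 1) := by positivity
    have hxx := h x (hxD n) x (hxD n)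
    rw [dist_self, zero_add] at hxx
    -- so diam > 1/(n+1), in particular diam - 1/(n+1) ≥ 0
    have h0 : (0:ℝ) ≤ Metric.diam (D n) - 1 / (n + 1) := by linarith
    have hle : Metric.diam (D n) ≤ Metric.diam (D n) - 1 / (n + 1) := by
      apply Metric.diam_le_of_forall_dist_le h0
      intro p hp q hq
      have := h p hp q hq
      linarith
    linarith
  choose y hy z hz hd using hpair
  have hy0 := key y hy
  have hz0 := key z hz
  have h1n : Tendsto (fun n : ℕ => 1 / ((n : ℝ) + 1)) atTop (nhds 0) :=
    tendsto_one_div_add_atTop_nhds_zero_nat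
  have hsum : Tendsto (fun n => ‖x - y n‖ + ‖x - z n‖ + 1 / ((n : ℝ) + 1))
      atTop (nhds 0) := by
    have := (hy0.add hz0).add h1n
    simpa using this
  apply tendsto_of_tendsto_of_tendsto_of_le_of_le tendsto_const_nhds hsum
  · intro n; exact Metric.diam_nonneg
  · intro n
    have htr : dist (y n) (z n) ≤ ‖x - y n‖ + ‖x - z n‖ := by
      have := dist_triangle (y n) x (z n)
      simp only [dist_eq_norm, norm_sub_rev (y n) x] at this
      rw [dist_eq_norm]
      linarith
    have := hd n
    push_cast at this ⊢
    linarith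
end

section
/- There exists an equivalent non-symmetric norm |||·||| on c₀ (i.e., a gauge of a bounded closed convex body containing 0 in its interior) such that every point of its unit sphere is a strongly extreme point of the unit ball C, but every nonempty open slice of C has ‖·‖_∞-diameter at least 1/√2; in particular no point of the unit sphere is denting. -/
open Filter Topology BoundedContinuousFunction Metric

noncomputable section
namespace S18

abbrev E := ℕ →ᵇ ℝ

/-- basic asymmetric functional -/
def Q (x : E) (j : ℕ → ℕ) (m : ℕ) : ℝ :=
  |x (j 0)| + ∑ k ∈ Finset.Ioc 0 m, (1/2:ℝ)^k * max (x (j k)) 0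

lemma geom_Ioc (m : ℕ) : ∑ k ∈ Finset.Ioc 0 m, (1/2:ℝ)^k = 1 - (1/2)^m := by
  induction m with
  | zero => simp
  | succ m ih =>
      rw [Finset.sum_Ioc_succ_top (Nat.zero_le _), ih]
      ring

lemma geom_Ioc_le (m : ℕ) : ∑ k ∈ Finset.Ioc 0 m, (1/2:ℝ)^k ≤ 1 := by
  rw [geom_Ioc]
  have h : (0:ℝ) ≤ (1/2)^m := by positivity
  linarith

lemma Q_le_two_norm (x : E) (j : ℕ → ℕ) (m : ℕ) : Q x j m ≤ 2 * ‖x‖ := by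
  have h1 : |x (j 0)| ≤ ‖x‖ := by
    simpa [Real.norm_eq_abs] using x.norm_coe_le_norm (j 0)
  have h2 : ∑ k ∈ Finset.Ioc 0 m, (1/2:ℝ)^k * max (x (j k)) 0 ≤
      ∑ k ∈ Finset.Ioc 0 m, (1/2:ℝ)^k * ‖x‖ := by
    refine Finset.sum_le_sum fun k _ => ?_
    refine mul_le_mul_of_nonneg_left ?_ (by positivity)
    refine max_le ?_ (norm_nonneg x)
    simpa [Real.norm_eq_abs] using (le_abs_self (x (j k))).trans
      (by simpa [Real.norm_eq_abs] using x.norm_coe_le_norm (j k))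
  have h3 : ∑ k ∈ Finset.Ioc 0 m, (1/2:ℝ)^k * ‖x‖ ≤ ‖x‖ := by
    rw [← Finset.sum_mul]
    nlinarith [geom_Ioc_le m, norm_nonneg x]
  unfold Q; linarith

def QS (x : E) : Set ℝ := {r | ∃ j m, StrictMono j ∧ Q x j m = r}

lemma QS_nonempty (x : E) : (QS x).Nonempty := ⟨|x 0|, id, 0, strictMono_id, by simp [Q]⟩

lemma QS_bddAbove (x : E) : BddAbove (QS x) := by
  refine ⟨2 * ‖x‖, fun r hr => ?_⟩
  obtain ⟨j, m, hj, rfl⟩ := hr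
  exact Q_le_two_norm x j m

def nn (x : E) : ℝ := sSup (QS x)

lemma Q_le_nn (x : E) {j : ℕ → ℕ} (m : ℕ) (hj : StrictMono j) : Q x j m ≤ nn x :=
  le_csSup (QS_bddAbove x) ⟨j, m, hj, rfl⟩

lemma abs_le_nn (x : E) (i : ℕ) : |x i| ≤ nn x := by
  have hj : StrictMono (fun t => i + t) := fun a b h => Nat.add_lt_add_left h i
  have := Q_le_nn x 0 hj
  simpa [Q] using this

lemma nn_nonneg (x : E) : 0 ≤ nn x := (abs_nonneg _).trans (abs_le_nn x 0)

lemma norm_le_nn (x : E) : ‖x‖ ≤ nn x := by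
  refine (BoundedContinuousFunction.norm_le (nn_nonneg x)).2 fun i => ?_
  simpa [Real.norm_eq_abs] using abs_le_nn x i

lemma nn_le_two_norm (x : E) : nn x ≤ 2 * ‖x‖ :=
  csSup_le (QS_nonempty x) (by rintro r ⟨j, m, hj, rfl⟩; exact Q_le_two_norm x j m)

lemma nn_add (x y : E) : nn (x + y) ≤ nn x + nn y := by
  refine csSup_le (QS_nonempty _) ?_
  rintro r ⟨j, m, hj, rfl⟩
  have hQ : Q (x + y) j m ≤ Q x j m + Q y j m := by
    unfold Q
    have h1 : |(x + y) (j 0)| ≤ |x (j 0)| + |y (j 0)| := by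
      simpa using abs_add_le (x (j 0)) (y (j 0))
    have h2 : ∑ k ∈ Finset.Ioc 0 m, (1/2:ℝ)^k * max ((x + y) (j k)) 0 ≤
        ∑ k ∈ Finset.Ioc 0 m, ((1/2:ℝ)^k * max (x (j k)) 0 + (1/2:ℝ)^k * max (y (j k)) 0) := by
      refine Finset.sum_le_sum fun k _ => ?_
      rw [← mul_add]
      refine mul_le_mul_of_nonneg_left ?_ (by positivity)
      simp only [BoundedContinuousFunction.coe_add, Pi.add_apply]
      refine max_le ?_ (by positivity)
      exact add_le_add (le_max_left _ _) (le_max_left _ _)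
    rw [Finset.sum_add_distrib] at h2
    linarith
  exact hQ.trans (add_le_add (Q_le_nn x m hj) (Q_le_nn y m hj))

lemma Q_smul (x : E) (j : ℕ → ℕ) (m : ℕ) {t : ℝ} (ht : 0 ≤ t) :
    Q (t • x) j m = t * Q x j m := by
  unfold Q
  have h1 : |(t • x) (j 0)| = t * |x (j 0)| := by
    simp [abs_mul, abs_of_nonneg ht]
  have h2 : ∀ k, max ((t • x) (j k)) 0 = t * max (x (j k)) 0 := by
    intro k
    simp only [BoundedContinuousFunction.coe_smul, Pi.smul_apply, smul_eq_mul]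
    rcases le_total (x (j k)) 0 with h | h
    · rw [max_eq_right h, max_eq_right (by nlinarith), mul_zero]
    · rw [max_eq_left h, max_eq_left (by nlinarith)]
  rw [h1, mul_add, Finset.mul_sum]
  congr 1
  refine Finset.sum_congr rfl fun k _ => ?_
  rw [h2 k]; ring

lemma nn_smul_le (x : E) {t : ℝ} (ht : 0 ≤ t) : nn (t • x) ≤ t * nn x := by
  refine csSup_le (QS_nonempty _) ?_
  rintro r ⟨j, m, hj, rfl⟩
  rw [Q_smul x j m ht]
  exact mul_le_mul_of_nonneg_left (Q_le_nn x m hj) ht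

lemma nn_smul (x : E) {t : ℝ} (ht : 0 ≤ t) : nn (t • x) = t * nn x := by
  rcases eq_or_lt_of_le ht with h | h
  · rw [← h, zero_smul, zero_mul]
    exact le_antisymm (by simpa using nn_smul_le x (t:=(0:ℝ)) le_rfl) (nn_nonneg 0)
  · refine le_antisymm (nn_smul_le x ht) ?_
    have h2 : nn x ≤ t⁻¹ * nn (t • x) := by
      have := nn_smul_le (t • x) (t := t⁻¹) (by positivity)
      rwa [smul_smul, inv_mul_cancel₀ h.ne', one_smul] at this
    calc t * nn x ≤ t * (t⁻¹ * nn (t • x)) := mul_le_mul_of_nonneg_left h2 ht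
      _ = nn (t • x) := by field_simp



/-! weights and the quadratic part -/

def wt (k : ℕ) : ℝ := (1/2:ℝ)^(k+1)

lemma wt_pos (k : ℕ) : 0 < wt k := by unfold wt; positivity

lemma summable_wt : Summable wt := by
  have := (summable_geometric_of_lt_one (by norm_num : (0:ℝ) ≤ 1/2) (by norm_num)).mul_left (1/2:ℝ)
  refine this.congr fun k => ?_
  simp [wt, pow_succ]; ring

lemma tsum_wt : ∑' k, wt k = 1 := by
  have h : ∀ k, wt k = (1/2:ℝ) * (1/2)^k := fun k => by simp [wt, pow_succ]; ring
  rw [tsum_congr h, tsum_mul_left, tsum_geometric_two]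
  norm_num

lemma wt_le_one (k : ℕ) : wt k ≤ 1 := by
  have : (1/2:ℝ)^(k+1) ≤ 1 := pow_le_one₀ (by norm_num) (by norm_num)
  simpa [wt] using this

lemma wt_antitone : Antitone wt := fun a b h => by
  exact pow_le_pow_of_le_one (by norm_num) (by norm_num) (by omega)

def qs (x : E) : ℝ := ∑' k, wt k * (x k)^2

lemma sq_coord_le (x : E) (k : ℕ) : (x k)^2 ≤ ‖x‖^2 := by
  have h := x.norm_coe_le_norm k
  rw [Real.norm_eq_abs] at h
  nlinarith [abs_nonneg (x k), sq_abs (x k)]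

lemma summable_qsf (x : E) : Summable (fun k => wt k * (x k)^2) := by
  refine Summable.of_nonneg_of_le (fun k => mul_nonneg (wt_pos k).le (sq_nonneg _)) (fun k => ?_)
    (summable_wt.mul_right (‖x‖^2))
  exact mul_le_mul_of_nonneg_left (sq_coord_le x k) (wt_pos k).le

lemma qs_nonneg (x : E) : 0 ≤ qs x :=
  tsum_nonneg fun k => mul_nonneg (wt_pos k).le (sq_nonneg _)

lemma qs_le_sq_norm (x : E) : qs x ≤ ‖x‖^2 := by
  have h := Summable.tsum_le_tsum (f := fun k => wt k * (x k)^2) (g := fun k => wt k * ‖x‖^2)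
    (fun k => mul_le_mul_of_nonneg_left (sq_coord_le x k) (wt_pos k).le)
    (summable_qsf x) (summable_wt.mul_right _)
  rwa [tsum_mul_right, tsum_wt, one_mul] at h

lemma coord_le_qs (x : E) (k : ℕ) : wt k * (x k)^2 ≤ qs x :=
  Summable.le_tsum (summable_qsf x) k (fun j _ => mul_nonneg (wt_pos j).le (sq_nonneg _))

lemma qs_smul (x : E) (t : ℝ) : qs (t • x) = t^2 * qs x := by
  unfold qs
  rw [← tsum_mul_left]
  refine tsum_congr fun k => ?_
  simp only [BoundedContinuousFunction.coe_smul, Pi.smul_apply, smul_eq_mul]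
  ring

lemma qs_neg (x : E) : qs (-x) = qs x := by
  refine tsum_congr fun k => ?_
  simp

def qq (x : E) : ℝ := Real.sqrt (qs x)

lemma qq_nonneg (x : E) : 0 ≤ qq x := Real.sqrt_nonneg _

lemma qq_sq (x : E) : qq x ^ 2 = qs x := Real.sq_sqrt (qs_nonneg x)

lemma qq_le_norm (x : E) : qq x ≤ ‖x‖ := by
  have := Real.sqrt_le_sqrt (qs_le_sq_norm x)
  rwa [Real.sqrt_sq (norm_nonneg x)] at this

lemma summable_qmix (x y : E) : Summable (fun k => wt k * (x k * y k)) := by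
  refine Summable.of_abs (Summable.of_nonneg_of_le (fun k => abs_nonneg _) (fun k => ?_)
    ((summable_wt.mul_right (‖x‖ * ‖y‖))))
  rw [abs_mul, abs_of_nonneg (wt_pos k).le, abs_mul]
  refine mul_le_mul_of_nonneg_left ?_ (wt_pos k).le
  have hx := x.norm_coe_le_norm k
  have hy := y.norm_coe_le_norm k
  rw [Real.norm_eq_abs] at hx hy
  exact mul_le_mul hx hy (abs_nonneg _) (norm_nonneg x)

lemma tsum_cs (x y : E) : ∑' k, wt k * (x k * y k) ≤ qq x * qq y := by
  refine le_of_tendsto' ((summable_qmix x y).hasSum.tendsto_sum_nat) (fun n => ?_)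
  set f : ℕ → ℝ := fun k => Real.sqrt (wt k) * x k
  set g : ℕ → ℝ := fun k => Real.sqrt (wt k) * y k
  have hfg : ∀ k, wt k * (x k * y k) = f k * g k := fun k => by
    simp only [f, g]
    rw [show Real.sqrt (wt k) * x k * (Real.sqrt (wt k) * y k)
        = (Real.sqrt (wt k) * Real.sqrt (wt k)) * (x k * y k) by ring,
      Real.mul_self_sqrt (wt_pos k).le]
  have hf2 : ∀ k, f k ^ 2 = wt k * (x k)^2 := fun k => by
    simp only [f, mul_pow, Real.sq_sqrt (wt_pos k).le]
  have hg2 : ∀ k, g k ^ 2 = wt k * (y k)^2 := fun k => by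
    simp only [g, mul_pow, Real.sq_sqrt (wt_pos k).le]
  have cs := Finset.sum_mul_sq_le_sq_mul_sq (Finset.range n) f g
  have hsx : ∑ k ∈ Finset.range n, f k ^ 2 ≤ qs x := by
    rw [Finset.sum_congr rfl fun k _ => hf2 k]
    exact Summable.sum_le_tsum _ (fun k _ => mul_nonneg (wt_pos k).le (sq_nonneg _)) (summable_qsf x)
  have hsy : ∑ k ∈ Finset.range n, g k ^ 2 ≤ qs y := by
    rw [Finset.sum_congr rfl fun k _ => hg2 k]
    exact Summable.sum_le_tsum _ (fun k _ => mul_nonneg (wt_pos k).le (sq_nonneg _)) (summable_qsf y)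
  have h1 : ∑ k ∈ Finset.range n, wt k * (x k * y k) = ∑ k ∈ Finset.range n, f k * g k :=
    Finset.sum_congr rfl fun k _ => hfg k
  rw [h1]
  have h2 : (∑ k ∈ Finset.range n, f k * g k)^2 ≤ qs x * qs y := by
    refine cs.trans ?_
    have h0 : (0:ℝ) ≤ ∑ k ∈ Finset.range n, f k ^2 := Finset.sum_nonneg fun k _ => sq_nonneg _
    have h0' : (0:ℝ) ≤ ∑ k ∈ Finset.range n, g k ^2 := Finset.sum_nonneg fun k _ => sq_nonneg _
    exact mul_le_mul hsx hsy h0' (qs_nonneg x)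
  calc ∑ k ∈ Finset.range n, f k * g k ≤ |∑ k ∈ Finset.range n, f k * g k| := le_abs_self _
    _ = Real.sqrt ((∑ k ∈ Finset.range n, f k * g k)^2) := (Real.sqrt_sq_eq_abs _).symm
    _ ≤ Real.sqrt (qs x * qs y) := Real.sqrt_le_sqrt h2
    _ = qq x * qq y := Real.sqrt_mul (qs_nonneg x) _

lemma qs_add_expand (x y : E) : qs (x + y) = qs x + qs y + 2 * ∑' k, wt k * (x k * y k) := by
  have h : ∀ k, wt k * ((x + y) k)^2
      = (wt k * (x k)^2 + wt k * (y k)^2) + 2 * (wt k * (x k * y k)) := by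
    intro k
    simp only [BoundedContinuousFunction.coe_add, Pi.add_apply]
    ring
  unfold qs
  rw [tsum_congr h, Summable.tsum_add (((summable_qsf x).add (summable_qsf y)))
    ((summable_qmix x y).mul_left 2), Summable.tsum_add (summable_qsf x) (summable_qsf y),
    tsum_mul_left]

lemma qq_add (x y : E) : qq (x + y) ≤ qq x + qq y := by
  have h1 : qs (x + y) ≤ (qq x + qq y)^2 := by
    rw [qs_add_expand]
    have := tsum_cs x y
    nlinarith [qq_sq x, qq_sq y]
  have := Real.sqrt_le_sqrt h1
  rwa [Real.sqrt_sq (add_nonneg (qq_nonneg x) (qq_nonneg y))] at this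

lemma qs_para (y z : E) : qs (y - z) + qs (y + z) = 2 * qs y + 2 * qs z := by
  unfold qs
  rw [← Summable.tsum_add (summable_qsf (y - z)) (summable_qsf (y + z))]
  have h : ∀ k, wt k * ((y - z) k)^2 + wt k * ((y + z) k)^2
      = 2 * (wt k * (y k)^2) + 2 * (wt k * (z k)^2) := by
    intro k
    simp only [BoundedContinuousFunction.coe_add, BoundedContinuousFunction.coe_sub,
      Pi.add_apply, Pi.sub_apply]
    ring
  rw [tsum_congr h, Summable.tsum_add ((summable_qsf y).mul_left 2) ((summable_qsf z).mul_left 2),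
    tsum_mul_left, tsum_mul_left]

/-! the gauge p -/

def pp (x : E) : ℝ := Real.sqrt (nn x ^ 2 + qs x)

lemma pp_nonneg (x : E) : 0 ≤ pp x := Real.sqrt_nonneg _

lemma pp_sq (x : E) : pp x ^ 2 = nn x ^2 + qs x :=
  Real.sq_sqrt (add_nonneg (sq_nonneg _) (qs_nonneg x))

lemma pp_smul (x : E) {t : ℝ} (ht : 0 ≤ t) : pp (t • x) = t * pp x := by
  unfold pp
  rw [nn_smul x ht, qs_smul, show (t * nn x)^2 + t^2 * qs x = t^2 * (nn x ^2 + qs x) by ring,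
    Real.sqrt_mul (sq_nonneg t), Real.sqrt_sq ht]

lemma sqrt2d {a b c d : ℝ} (ha : 0 ≤ a) (hb : 0 ≤ b) (hc : 0 ≤ c) (hd : 0 ≤ d) :
    Real.sqrt ((a+b)^2 + (c+d)^2) ≤ Real.sqrt (a^2+c^2) + Real.sqrt (b^2+d^2) := by
  have h1 : a*b + c*d ≤ Real.sqrt (a^2+c^2) * Real.sqrt (b^2+d^2) := by
    rw [← Real.sqrt_mul (by positivity)]
    have h2 : (a*b + c*d)^2 ≤ (a^2+c^2) * (b^2+d^2) := by nlinarith [sq_nonneg (a*d - b*c)]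
    calc a*b + c*d ≤ |a*b + c*d| := le_abs_self _
      _ = Real.sqrt ((a*b + c*d)^2) := (Real.sqrt_sq_eq_abs _).symm
      _ ≤ _ := Real.sqrt_le_sqrt h2
  have h3 : (a+b)^2 + (c+d)^2 ≤ (Real.sqrt (a^2+c^2) + Real.sqrt (b^2+d^2))^2 := by
    have e1 : Real.sqrt (a^2+c^2) ^2 = a^2+c^2 := Real.sq_sqrt (by positivity)
    have e2 : Real.sqrt (b^2+d^2) ^2 = b^2+d^2 := Real.sq_sqrt (by positivity)
    nlinarith
  have := Real.sqrt_le_sqrt h3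
  rwa [Real.sqrt_sq (by positivity)] at this

lemma pp_add (x y : E) : pp (x + y) ≤ pp x + pp y := by
  have h1 : nn (x+y)^2 ≤ (nn x + nn y)^2 := by
    have := nn_add x y
    nlinarith [nn_nonneg (x+y), nn_nonneg x, nn_nonneg y]
  have h2 : qs (x+y) ≤ (qq x + qq y)^2 := by
    have := qq_add x y
    nlinarith [qq_nonneg (x+y), qq_nonneg x, qq_nonneg y, qq_sq (x+y)]
  have h3 : pp (x+y) ≤ Real.sqrt ((nn x + nn y)^2 + (qq x + qq y)^2) :=
    Real.sqrt_le_sqrt (by linarith)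
  refine h3.trans ?_
  have h4 := sqrt2d (nn_nonneg x) (nn_nonneg y) (qq_nonneg x) (qq_nonneg y)
  have e1 : Real.sqrt (nn x^2 + qq x^2) = pp x := by rw [qq_sq]; rfl
  have e2 : Real.sqrt (nn y^2 + qq y^2) = pp y := by rw [qq_sq]; rfl
  rwa [e1, e2] at h4

lemma norm_le_pp (x : E) : ‖x‖ ≤ pp x := by
  have h1 : ‖x‖ ≤ Real.sqrt (nn x^2) := by
    rw [Real.sqrt_sq (nn_nonneg x)]; exact norm_le_nn x
  exact h1.trans (Real.sqrt_le_sqrt (by nlinarith [qs_nonneg x]))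

lemma pp_le_three (x : E) : pp x ≤ 3 * ‖x‖ := by
  have h1 : nn x ^2 + qs x ≤ (3 * ‖x‖)^2 := by
    nlinarith [nn_le_two_norm x, qs_le_sq_norm x, norm_nonneg x, nn_nonneg x]
  have := Real.sqrt_le_sqrt h1
  rwa [Real.sqrt_sq (by positivity)] at this

lemma pp_le_one_iff (x : E) : pp x ≤ 1 ↔ nn x ^2 + qs x ≤ 1 := by
  constructor
  · intro h
    have := pp_sq x
    nlinarith [pp_nonneg x]
  · intro h
    have : pp x ≤ Real.sqrt 1 := Real.sqrt_le_sqrt h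
    simpa using this

lemma pp_eq_one (x : E) (h : pp x = 1) : nn x ^2 + qs x = 1 := by
  have := pp_sq x
  rw [h] at this
  linarith

/-! basis bumps -/

def en (n : ℕ) : E :=
  ⟨⟨fun k => if k = n then (1:ℝ) else 0, continuous_of_discreteTopology⟩, 2, by
    intro a b
    dsimp
    split_ifs <;> norm_num [Real.dist_eq]⟩

@[simp] lemma en_apply (n k : ℕ) : en n k = if k = n then (1:ℝ) else 0 := rfl

lemma norm_en (n : ℕ) : ‖en n‖ = 1 := by
  refine le_antisymm ((BoundedContinuousFunction.norm_le (by norm_num)).2 fun k => ?_) ?_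
  · simp only [en_apply]
    split_ifs <;> norm_num
  · have := (en n).norm_coe_le_norm n
    simpa using this



lemma abs_apply_le (v : E) (k : ℕ) : |v k| ≤ ‖v‖ := by
  simpa [Real.norm_eq_abs] using v.norm_coe_le_norm k

/-! Lipschitz-type continuity and limits -/

lemma tendsto_nn {g : ℕ → E} {L : E} (h : Tendsto (fun n => ‖L - g n‖) atTop (nhds 0)) :
    Tendsto (fun n => nn (g n)) atTop (nhds (nn L)) := by
  have hb : ∀ n, ‖nn (g n) - nn L‖ ≤ 2 * ‖L - g n‖ := by
    intro n
    have h1 : nn (g n) ≤ nn L + 2 * ‖L - g n‖ := by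
      have := nn_add L (g n - L)
      simp only [add_sub_cancel] at this
      have h2 := nn_le_two_norm (g n - L)
      rw [show ‖g n - L‖ = ‖L - g n‖ from norm_sub_rev _ _] at h2
      linarith
    have h2 : nn L ≤ nn (g n) + 2 * ‖L - g n‖ := by
      have := nn_add (g n) (L - g n)
      simp only [add_sub_cancel] at this
      have h2 := nn_le_two_norm (L - g n)
      linarith
    rw [Real.norm_eq_abs, abs_sub_le_iff]
    constructor <;> linarith
  have h0 : Tendsto (fun n => nn (g n) - nn L) atTop (nhds 0) :=
    squeeze_zero_norm hb (by simpa using h.const_mul 2)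
  have := h0.add_const (nn L)
  simpa using this

lemma tendsto_qq {g : ℕ → E} {L : E} (h : Tendsto (fun n => ‖L - g n‖) atTop (nhds 0)) :
    Tendsto (fun n => qq (g n)) atTop (nhds (qq L)) := by
  have hb : ∀ n, ‖qq (g n) - qq L‖ ≤ ‖L - g n‖ := by
    intro n
    have h1 : qq (g n) ≤ qq L + ‖L - g n‖ := by
      have := qq_add L (g n - L)
      simp only [add_sub_cancel] at this
      have h2 := qq_le_norm (g n - L)
      rw [show ‖g n - L‖ = ‖L - g n‖ from norm_sub_rev _ _] at h2
      linarith
    have h2 : qq L ≤ qq (g n) + ‖L - g n‖ := by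
      have := qq_add (g n) (L - g n)
      simp only [add_sub_cancel] at this
      have h2 := qq_le_norm (L - g n)
      linarith
    rw [Real.norm_eq_abs, abs_sub_le_iff]
    constructor <;> linarith
  have h0 : Tendsto (fun n => qq (g n) - qq L) atTop (nhds 0) := squeeze_zero_norm hb h
  have := h0.add_const (qq L)
  simpa using this

lemma tendsto_qs {g : ℕ → E} {L : E} (h : Tendsto (fun n => ‖L - g n‖) atTop (nhds 0)) :
    Tendsto (fun n => qs (g n)) atTop (nhds (qs L)) := by
  have := (tendsto_qq h).pow 2
  simpa only [qq_sq] using this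

/-! near-optimal witnesses -/

lemma def_lemma (x : E) (hx : Tendsto (⇑x) atTop (nhds 0)) {c : ℝ} (hc : 0 < c) :
    ∃ j m, StrictMono j ∧ nn x - Q x j m < (1/2:ℝ)^(m+1) * c := by
  obtain ⟨N, hN⟩ := Metric.tendsto_atTop.mp hx (c/8) (by positivity)
  have hN' : ∀ k, N ≤ k → |x k| ≤ c/8 := by
    intro k hk
    have := hN k hk
    rw [Real.dist_eq, sub_zero] at this
    linarith
  have hmax : ∀ k, N ≤ k → max (x k) 0 ≤ c/8 := by
    intro k hk
    exact max_le ((le_abs_self _).trans (hN' k hk)) (by positivity)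
  set η : ℝ := (1/2:ℝ)^(N+2) * c with hηdef
  have hηpos : 0 < η := by positivity
  obtain ⟨r, hrQS, hr⟩ := exists_lt_of_lt_csSup (QS_nonempty x)
    (show nn x - η < nn x by linarith)
  obtain ⟨j, m, hj, rfl⟩ := hrQS
  by_cases hcase : N ≤ j 0
  · refine ⟨j, 0, hj, ?_⟩
    have hub : Q x j m ≤ c/8 + c/8 := by
      unfold Q
      have h1 : |x (j 0)| ≤ c/8 := hN' _ hcase
      have h2 : ∑ k ∈ Finset.Ioc 0 m, (1/2:ℝ)^k * max (x (j k)) 0 ≤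
          ∑ k ∈ Finset.Ioc 0 m, (1/2:ℝ)^k * (c/8) := by
        refine Finset.sum_le_sum fun k _ => ?_
        refine mul_le_mul_of_nonneg_left (hmax _ (hcase.trans (hj.monotone (Nat.zero_le k)))) (by positivity)
      have h3 : ∑ k ∈ Finset.Ioc 0 m, (1/2:ℝ)^k * (c/8) ≤ c/8 := by
        rw [← Finset.sum_mul]
        nlinarith [geom_Ioc_le m]
      linarith
    have hη4 : η ≤ c/4 := by
      have : (1/2:ℝ)^(N+2) ≤ (1/2)^2 :=
        pow_le_pow_of_le_one (by norm_num) (by norm_num) (by omega)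
      rw [hηdef]
      nlinarith
    have hQ0 : 0 ≤ Q x j 0 := by
      have : Q x j 0 = |x (j 0)| := by simp [Q]
      rw [this]; positivity
    have hnn : nn x < c/2 := by linarith
    have heq : (1/2:ℝ)^(0+1) * c = c/2 := by ring_nf
    linarith
  · push_neg at hcase
    have hN0 : 0 < N := by omega
    set s : Finset ℕ := (Finset.range N).filter (fun i => j i < N) with hsdef
    have h0s : (0:ℕ) ∈ s := by
      rw [hsdef, Finset.mem_filter, Finset.mem_range]
      exact ⟨hN0, hcase⟩
    set M := s.max' ⟨0, h0s⟩ with hMdef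
    set m' := min m M with hm'def
    have hm'm : m' ≤ m := min_le_left _ _
    have hMmem : M ∈ s := s.max'_mem ⟨0, h0s⟩
    have hMmem' := Finset.mem_filter.mp hMmem
    have hMN : M < N := Finset.mem_range.mp hMmem'.1
    have hm'N : m' + 1 ≤ N := by omega
    have htail : ∀ k, m' < k → k ≤ m → N ≤ j k := by
      intro k h1 h2
      by_contra h3
      push_neg at h3
      have hkj : k ≤ j k := hj.le_apply
      have hks : k ∈ s := by
        rw [hsdef, Finset.mem_filter, Finset.mem_range]
        exact ⟨by omega, h3⟩
      have : k ≤ M := s.le_max' k hks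
      omega
    refine ⟨j, m', hj, ?_⟩
    have hsplit : Q x j m = Q x j m' +
        ∑ k ∈ Finset.Ioc m' m, (1/2:ℝ)^k * max (x (j k)) 0 := by
      unfold Q
      rw [add_assoc]
      congr 1
      exact (Finset.sum_Ioc_consecutive _ (Nat.zero_le m') hm'm).symm
    have hgeo : ∑ k ∈ Finset.Ioc m' m, (1/2:ℝ)^k = (1/2)^m' - (1/2)^m := by
      have := Finset.sum_Ioc_consecutive (fun k => (1/2:ℝ)^k) (Nat.zero_le m') hm'm
      rw [geom_Ioc, geom_Ioc] at this
      linarith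
    have htb : ∑ k ∈ Finset.Ioc m' m, (1/2:ℝ)^k * max (x (j k)) 0 ≤ (1/2)^m' * (c/8) := by
      have h2 : ∑ k ∈ Finset.Ioc m' m, (1/2:ℝ)^k * max (x (j k)) 0 ≤
          ∑ k ∈ Finset.Ioc m' m, (1/2:ℝ)^k * (c/8) := by
        refine Finset.sum_le_sum fun k hk => ?_
        obtain ⟨hk1, hk2⟩ := Finset.mem_Ioc.mp hk
        exact mul_le_mul_of_nonneg_left (hmax _ (htail k hk1 hk2)) (by positivity)
      rw [← Finset.sum_mul, hgeo] at h2
      nlinarith [pow_pos (by norm_num : (0:ℝ) < 1/2) m]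
    have hη' : η ≤ (1/2:ℝ)^(m'+1) * c / 4 := by
      have h1 : (1/2:ℝ)^(N+2) ≤ (1/2)^(m'+3) :=
        pow_le_pow_of_le_one (by norm_num) (by norm_num) (by omega)
      have h2 : (1/2:ℝ)^(m'+3) = (1/2)^(m'+1) / 4 := by
        rw [pow_succ, pow_succ]
        ring
      rw [hηdef]
      rw [h2] at h1
      nlinarith
    have hhalf : (1/2:ℝ)^m' * (c/8) = (1/2)^(m'+1) * c / 4 := by
      rw [pow_succ]
      ring
    have hpw : (0:ℝ) < (1/2)^(m'+1) * c := by positivity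
    linarith

/-! perturbation estimates -/

lemma sub_en_apply (u : E) (t : ℝ) (n k : ℕ) :
    (u - t • en n) k = if k = n then u n - t else u k := by
  simp only [BoundedContinuousFunction.coe_sub, BoundedContinuousFunction.coe_smul, Pi.sub_apply,
    Pi.smul_apply, smul_eq_mul, en_apply]
  split_ifs with h
  · subst h; ring
  · ring

lemma pert (u : E) {t δ : ℝ} (ht : 0 ≤ t) (hδ : 0 ≤ δ) (n : ℕ)
    (htail : ∀ k, n < k → u k ≤ δ) :
    nn (u - t • en n) ≤ max (nn u) (|u n - t| + δ) := by
  refine csSup_le (QS_nonempty _) ?_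
  rintro r ⟨j, m, hj, rfl⟩
  by_cases h0 : j 0 = n
  · refine le_max_of_le_right ?_
    have hfst : |(u - t • en n) (j 0)| = |u n - t| := by rw [sub_en_apply, h0, if_pos rfl]
    have hsum : ∑ k ∈ Finset.Ioc 0 m, (1/2:ℝ)^k * max ((u - t • en n) (j k)) 0 ≤ δ := by
      have hterm : ∀ k ∈ Finset.Ioc 0 m,
          (1/2:ℝ)^k * max ((u - t • en n) (j k)) 0 ≤ (1/2:ℝ)^k * δ := by
        intro k hk
        have hk0 : 0 < k := (Finset.mem_Ioc.mp hk).1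
        have hjk : n < j k := h0 ▸ hj hk0
        rw [sub_en_apply, if_neg (by omega)]
        exact mul_le_mul_of_nonneg_left (max_le (htail _ hjk) hδ) (by positivity)
      calc ∑ k ∈ Finset.Ioc 0 m, (1/2:ℝ)^k * max ((u - t • en n) (j k)) 0
          ≤ ∑ k ∈ Finset.Ioc 0 m, (1/2:ℝ)^k * δ := Finset.sum_le_sum hterm
        _ = (∑ k ∈ Finset.Ioc 0 m, (1/2:ℝ)^k) * δ := by rw [Finset.sum_mul]
        _ ≤ 1 * δ := mul_le_mul_of_nonneg_right (geom_Ioc_le m) hδ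
        _ = δ := one_mul δ
    unfold Q
    rw [hfst]
    linarith
  · refine le_max_of_le_left (le_trans ?_ (Q_le_nn u m hj))
    unfold Q
    have hfst : |(u - t • en n) (j 0)| = |u (j 0)| := by rw [sub_en_apply, if_neg h0]
    refine add_le_add (le_of_eq hfst) (Finset.sum_le_sum fun k _ => ?_)
    rw [sub_en_apply]
    refine mul_le_mul_of_nonneg_left ?_ (by positivity)
    split_ifs with h
    · rw [h]
      exact max_le ((sub_le_self _ ht).trans (le_max_left _ _)) (le_max_right _ _)
    · exact le_refl _

lemma qs_pert (u : E) (t : ℝ) (n : ℕ) :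
    qs (u - t • en n) = qs u + wt n * ((u n - t)^2 - (u n)^2) := by
  have h1 : HasSum (fun k => wt k * (u k)^2) (qs u) := (summable_qsf u).hasSum
  have h2 : HasSum (fun k => if k = n then wt n * ((u n - t)^2 - (u n)^2) else 0)
      (wt n * ((u n - t)^2 - (u n)^2)) := hasSum_ite_eq n _
  have hfun : (fun k => wt k * ((u - t • en n) k)^2)
      = fun k => wt k * (u k)^2 + (if k = n then wt n * ((u n - t)^2 - (u n)^2) else 0) := by
    funext k
    rw [sub_en_apply]
    by_cases h : k = n
    · subst h; rw [if_pos rfl, if_pos rfl]; ring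
    · rw [if_neg h, if_neg h, add_zero]
  have key : HasSum (fun k => wt k * ((u - t • en n) k)^2)
      (qs u + wt n * ((u n - t)^2 - (u n)^2)) := by
    rw [hfun]; exact h1.add h2
  exact key.tsum_eq

/-! extension of tuples -/

def jExt (j : ℕ → ℕ) (m' : ℕ) (k : ℕ) : ℕ → ℕ :=
  fun i => if i ≤ m' then j i else k + (i - (m'+1))

lemma jExt_strictMono {j : ℕ → ℕ} (hj : StrictMono j) {m' k : ℕ} (hk : j m' < k) :
    StrictMono (jExt j m' k) := by
  intro a b hab
  unfold jExt
  rcases le_or_gt a m' with ha | ha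
  · rcases le_or_gt b m' with hb | hb
    · rw [if_pos ha, if_pos hb]; exact hj hab
    · rw [if_pos ha, if_neg (by omega)]
      have h1 : j a ≤ j m' := hj.monotone ha
      omega
  · rw [if_neg (by omega), if_neg (by omega)]
    omega

lemma Q_jExt (v : E) (j : ℕ → ℕ) (m' k : ℕ) :
    Q v (jExt j m' k) (m'+1) = Q v j m' + (1/2:ℝ)^(m'+1) * max (v k) 0 := by
  unfold Q
  rw [Finset.sum_Ioc_succ_top (Nat.zero_le m')]
  have h0 : jExt j m' k 0 = j 0 := if_pos (Nat.zero_le m')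
  have htop : jExt j m' k (m'+1) = k := by
    unfold jExt
    rw [if_neg (by omega), Nat.sub_self, Nat.add_zero]
  rw [h0, htop, Finset.sum_congr rfl (fun i hi => by
    rw [show jExt j m' k i = j i from if_pos (Finset.mem_Ioc.mp hi).2])]
  ring

lemma tendsto_Q {g : ℕ → E} {L : E} (j : ℕ → ℕ) (m : ℕ)
    (h : ∀ i, Tendsto (fun n => (g n) (j i)) atTop (nhds (L (j i)))) :
    Tendsto (fun n => Q (g n) j m) atTop (nhds (Q L j m)) := by
  unfold Q
  refine Tendsto.add ((h 0).abs) ?_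
  refine tendsto_finset_sum _ fun k _ => ?_
  exact ((h k).max tendsto_const_nhds).const_mul _



lemma qq_smul (x : E) {t : ℝ} (ht : 0 ≤ t) : qq (t • x) = t * qq x := by
  unfold qq
  rw [qs_smul, Real.sqrt_mul (sq_nonneg t), Real.sqrt_sq ht]

set_option maxHeartbeats 1000000 in
lemma clause4 (x : E) (hx0 : Tendsto (⇑x) atTop (nhds 0)) (hx1 : pp x = 1)
    (y z : ℕ → E)
    (hy : ∀ n, Tendsto (⇑(y n)) atTop (nhds 0) ∧ pp (y n) ≤ 1)
    (hz : ∀ n, Tendsto (⇑(z n)) atTop (nhds 0) ∧ pp (z n) ≤ 1)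
    (hmid : Tendsto (fun n => ‖x - (1/2 : ℝ) • (y n + z n)‖) atTop (nhds 0)) :
    Tendsto (fun n => ‖y n - z n‖) atTop (nhds 0) := by
  set mid : ℕ → E := fun n => (1/2 : ℝ) • (y n + z n) with hmiddef
  have hα : Tendsto (fun n => nn (mid n)) atTop (nhds (nn x)) := tendsto_nn hmid
  have hβ : Tendsto (fun n => qq (mid n)) atTop (nhds (qq x)) := tendsto_qq hmid
  have hqsmid : Tendsto (fun n => qs (mid n)) atTop (nhds (qs x)) := tendsto_qs hmid
  have hone : nn x ^2 + qs x = 1 := pp_eq_one x hx1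
  have hay : ∀ n, nn (y n)^2 + qs (y n) ≤ 1 := fun n => (pp_le_one_iff (y n)).1 (hy n).2
  have haz : ∀ n, nn (z n)^2 + qs (z n) ≤ 1 := fun n => (pp_le_one_iff (z n)).1 (hz n).2
  have hmid_eq : ∀ n, y n + z n = (2:ℝ) • mid n := by
    intro n
    simp only [hmiddef]
    rw [smul_smul]
    norm_num
  have hαle : ∀ n, nn (mid n) ≤ (nn (y n) + nn (z n))/2 := by
    intro n
    have h1 : nn (mid n) = (1/2) * nn (y n + z n) := nn_smul _ (by norm_num)
    have h2 := nn_add (y n) (z n)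
    rw [h1]; linarith
  have hβle : ∀ n, qq (mid n) ≤ (qq (y n) + qq (z n))/2 := by
    intro n
    have h1 : qq (mid n) = (1/2) * qq (y n + z n) := qq_smul _ (by norm_num)
    have h2 := qq_add (y n) (z n)
    rw [h1]; linarith
  have hst : ∀ n, ((nn (y n) + nn (z n))/2)^2 + ((qq (y n) + qq (z n))/2)^2 ≤ 1 := by
    intro n
    have h1 := hay n; have h2 := haz n
    have e1 := qq_sq (y n); have e2 := qq_sq (z n)
    nlinarith [sq_nonneg (nn (y n) - nn (z n)), sq_nonneg (qq (y n) - qq (z n))]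
  -- squared limits
  have hup : Tendsto (fun n => 1 - (qq (mid n))^2) atTop (nhds (nn x ^2)) := by
    have h0 := (hβ.pow 2).const_sub 1
    rw [show (1:ℝ) - qq x ^2 = nn x ^2 by rw [qq_sq]; linarith] at h0
    exact h0
  have hs2 : Tendsto (fun n => (((nn (y n) + nn (z n))/2))^2) atTop (nhds (nn x ^2)) := by
    refine tendsto_of_tendsto_of_tendsto_of_le_of_le (hα.pow 2) hup ?_ ?_
    · intro n
      exact pow_le_pow_left₀ (nn_nonneg _) (hαle n) 2
    · intro n
      have h1 := hst n
      have h2 : (qq (mid n))^2 ≤ ((qq (y n) + qq (z n))/2)^2 :=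
        pow_le_pow_left₀ (qq_nonneg _) (hβle n) 2
      linarith
  have ht2 : Tendsto (fun n => (((qq (y n) + qq (z n))/2))^2) atTop (nhds (qs x)) := by
    have hup2 : Tendsto (fun n => 1 - (((nn (y n) + nn (z n))/2))^2) atTop (nhds (qs x)) := by
      have h0 := hs2.const_sub 1
      rw [show (1:ℝ) - nn x ^2 = qs x by linarith] at h0
      exact h0
    have hlow : Tendsto (fun n => (qq (mid n))^2) atTop (nhds (qs x)) := by
      have := hβ.pow 2
      rwa [qq_sq] at this
    refine tendsto_of_tendsto_of_tendsto_of_le_of_le hlow hup2 ?_ ?_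
    · intro n
      exact pow_le_pow_left₀ (qq_nonneg _) (hβle n) 2
    · intro n
      have h1 := hst n
      linarith
  have hd2 : Tendsto (fun n => (nn (y n) - nn (z n))^2 + (qq (y n) - qq (z n))^2)
      atTop (nhds 0) := by
    have hupper : Tendsto (fun n => 4 - 4*(((nn (y n) + nn (z n))/2)^2
        + ((qq (y n) + qq (z n))/2)^2)) atTop (nhds 0) := by
      have h0 := ((hs2.add ht2).const_mul (4:ℝ)).const_sub 4
      rw [show (4:ℝ) - 4*(nn x ^2 + qs x) = 0 by rw [hone]; ring] at h0
      exact h0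
    refine tendsto_of_tendsto_of_tendsto_of_le_of_le tendsto_const_nhds hupper
      (fun n => by positivity) (fun n => ?_)
    have h1 := hay n; have h2 := haz n
    have e1 := qq_sq (y n); have e2 := qq_sq (z n)
    nlinarith
  have habs : ∀ w v : ℝ, |w| ≤ Real.sqrt (w^2 + v^2) := by
    intro w v
    rw [← Real.sqrt_sq_eq_abs]
    exact Real.sqrt_le_sqrt (by nlinarith [sq_nonneg v])
  have hac : Tendsto (fun n => nn (y n) - nn (z n)) atTop (nhds 0) := by
    refine squeeze_zero_norm (fun n => ?_) (by simpa using hd2.sqrt)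
    rw [Real.norm_eq_abs]
    exact habs _ _
  have hbd : Tendsto (fun n => qq (y n) - qq (z n)) atTop (nhds 0) := by
    refine squeeze_zero_norm (fun n => ?_) (by simpa using hd2.sqrt)
    rw [Real.norm_eq_abs]
    rw [show (nn (y n) - nn (z n))^2 + (qq (y n) - qq (z n))^2
        = (qq (y n) - qq (z n))^2 + (nn (y n) - nn (z n))^2 by ring]
    exact habs _ _
  have hs1 : Tendsto (fun n => (nn (y n) + nn (z n))/2) atTop (nhds (nn x)) := by
    have h2 : Tendsto (fun n => Real.sqrt ((((nn (y n) + nn (z n))/2))^2)) atTop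
        (nhds (Real.sqrt (nn x ^2))) := hs2.sqrt
    rw [Real.sqrt_sq (nn_nonneg x)] at h2
    refine h2.congr fun n => Real.sqrt_sq ?_
    have := nn_nonneg (y n); have := nn_nonneg (z n)
    linarith
  have ha : Tendsto (fun n => nn (y n)) atTop (nhds (nn x)) := by
    have h0 := hs1.add (hac.div_const 2)
    rw [show nn x + 0/2 = nn x by ring] at h0
    refine h0.congr fun n => by ring
  have hcz : Tendsto (fun n => nn (z n)) atTop (nhds (nn x)) := by
    have h0 := hs1.sub (hac.div_const 2)
    rw [show nn x - 0/2 = nn x by ring] at h0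
    refine h0.congr fun n => by ring
  have hqsy : Tendsto (fun n => qs (y n)) atTop (nhds (qs x)) := by
    have ht1 : Tendsto (fun n => (qq (y n) + qq (z n))/2) atTop (nhds (qq x)) := by
      have h2 : Tendsto (fun n => Real.sqrt ((((qq (y n) + qq (z n))/2))^2)) atTop
          (nhds (Real.sqrt (qs x))) := ht2.sqrt
      refine (h2.congr fun n => Real.sqrt_sq ?_)
      have := qq_nonneg (y n); have := qq_nonneg (z n)
      linarith
    have hb : Tendsto (fun n => qq (y n)) atTop (nhds (qq x)) := by
      have h0 := ht1.add (hbd.div_const 2)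
      rw [show qq x + 0/2 = qq x by ring] at h0
      refine h0.congr fun n => by ring
    have h5 := hb.pow 2
    simp only [qq_sq] at h5
    exact h5
  have hqsz : Tendsto (fun n => qs (z n)) atTop (nhds (qs x)) := by
    have ht1 : Tendsto (fun n => (qq (y n) + qq (z n))/2) atTop (nhds (qq x)) := by
      have h2 : Tendsto (fun n => Real.sqrt ((((qq (y n) + qq (z n))/2))^2)) atTop
          (nhds (Real.sqrt (qs x))) := ht2.sqrt
      refine (h2.congr fun n => Real.sqrt_sq ?_)
      have := qq_nonneg (y n); have := qq_nonneg (z n)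
      linarith
    have hb : Tendsto (fun n => qq (z n)) atTop (nhds (qq x)) := by
      have h0 := ht1.sub (hbd.div_const 2)
      rw [show qq x - 0/2 = qq x by ring] at h0
      refine h0.congr fun n => by ring
    have h5 := hb.pow 2
    simp only [qq_sq] at h5
    exact h5
  have hqu : Tendsto (fun n => qs (y n - z n)) atTop (nhds 0) := by
    have hid : ∀ n, qs (y n - z n) = 2*qs (y n) + 2*qs (z n) - 4 * qs (mid n) := by
      intro n
      have h1 := qs_para (y n) (z n)
      have h2 : qs (y n + z n) = 4 * qs (mid n) := by
        rw [hmid_eq n, qs_smul]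
        norm_num
      linarith
    have h3 := ((hqsy.const_mul 2).add (hqsz.const_mul 2)).sub (hqsmid.const_mul 4)
    rw [show 2*qs x + 2*qs x - 4*qs x = 0 by ring] at h3
    exact h3.congr fun n => (hid n).symm
  have hcoord : ∀ i, Tendsto (fun n => (y n - z n) i) atTop (nhds 0) := by
    intro i
    have hb : ∀ n, ‖(y n - z n) i‖ ≤ Real.sqrt (qs (y n - z n)) * Real.sqrt ((wt i)⁻¹) := by
      intro n
      have h1 := coord_le_qs (y n - z n) i
      rw [Real.norm_eq_abs, ← Real.sqrt_sq_eq_abs, ← Real.sqrt_mul (qs_nonneg _)]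
      refine Real.sqrt_le_sqrt ?_
      rw [← div_eq_mul_inv, le_div_iff₀ (wt_pos i)]
      linarith [h1]
    have hg : Tendsto (fun n => Real.sqrt (qs (y n - z n)) * Real.sqrt ((wt i)⁻¹)) atTop
        (nhds 0) := by
      have := hqu.sqrt.mul_const (Real.sqrt ((wt i)⁻¹))
      simpa using this
    exact squeeze_zero_norm hb hg
  have hmidcoord : ∀ i, Tendsto (fun n => (mid n) i) atTop (nhds (x i)) := by
    intro i
    have hb : ∀ n, ‖(mid n) i - x i‖ ≤ ‖x - mid n‖ := by
      intro n
      have h1 := abs_apply_le (x - mid n) i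
      simp only [BoundedContinuousFunction.coe_sub, Pi.sub_apply] at h1
      rw [Real.norm_eq_abs, abs_sub_comm]
      exact h1
    have h0 := squeeze_zero_norm hb hmid
    have := h0.add_const (x i)
    simpa using this
  have hsubc : ∀ (n : ℕ) (i : ℕ), (y n - z n) i = (y n) i - (z n) i := by
    intro n i
    simp [BoundedContinuousFunction.coe_sub, Pi.sub_apply]
  have hsumc : ∀ (n : ℕ) (i : ℕ), (y n) i + (z n) i = 2 * (mid n) i := by
    intro n i
    have h := congrArg (fun v : E => v i) (hmid_eq n)
    simpa [BoundedContinuousFunction.coe_add, Pi.add_apply] using h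
  have hycoord : ∀ i, Tendsto (fun n => (y n) i) atTop (nhds (x i)) := by
    intro i
    have h0 := (hmidcoord i).add ((hcoord i).div_const 2)
    rw [show x i + 0/2 = x i by ring] at h0
    refine h0.congr fun n => ?_
    have h1 := hsubc n i
    have h2 := hsumc n i
    linarith
  have hzcoord : ∀ i, Tendsto (fun n => (z n) i) atTop (nhds (x i)) := by
    intro i
    have h0 := (hmidcoord i).sub ((hcoord i).div_const 2)
    rw [show x i - 0/2 = x i by ring] at h0
    refine h0.congr fun n => ?_
    have h1 := hsubc n i
    have h2 := hsumc n i
    linarith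
  -- main ε-argument
  rw [Metric.tendsto_atTop]
  intro ε hε
  have hc16 : 0 < ε/16 := by linarith
  obtain ⟨j, m', hj, hdef⟩ := def_lemma x hx0 hc16
  set W : ℝ := (1/2:ℝ)^(m'+1) with hWdef
  have hW : 0 < W := by rw [hWdef]; positivity
  obtain ⟨K₁, hK₁⟩ := Metric.tendsto_atTop.mp hx0 (ε/16) hc16
  set K := max K₁ (j m' + 1) with hKdef
  have hxK : ∀ k, K < k → |x k| ≤ ε/16 := by
    intro k hk
    have h1 : K₁ ≤ k := le_trans (le_max_left _ _) hk.le
    have := hK₁ k h1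
    rw [Real.dist_eq, sub_zero] at this
    linarith
  have hjm'K : j m' < K := by
    have := le_max_right K₁ (j m' + 1)
    omega
  have hQy : Tendsto (fun n => Q (y n) j m') atTop (nhds (Q x j m')) :=
    tendsto_Q j m' (fun i => hycoord (j i))
  have hQz : Tendsto (fun n => Q (z n) j m') atTop (nhds (Q x j m')) :=
    tendsto_Q j m' (fun i => hzcoord (j i))
  have hWε : 0 < W * (ε/16) := by positivity
  have E1 : ∀ᶠ n in atTop, Q x j m' - W*(ε/16) ≤ Q (y n) j m' :=
    hQy.eventually (eventually_ge_nhds (by linarith))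
  have E1' : ∀ᶠ n in atTop, Q x j m' - W*(ε/16) ≤ Q (z n) j m' :=
    hQz.eventually (eventually_ge_nhds (by linarith))
  have E2 : ∀ᶠ n in atTop, nn (y n) ≤ nn x + W*(ε/16) :=
    ha.eventually (eventually_le_nhds (by linarith))
  have E2' : ∀ᶠ n in atTop, nn (z n) ≤ nn x + W*(ε/16) :=
    hcz.eventually (eventually_le_nhds (by linarith))
  have E3 : ∀ᶠ n in atTop, ‖x - mid n‖ ≤ ε/16 :=
    hmid.eventually (eventually_le_nhds (by linarith))
  have E4 : ∀ᶠ n in atTop,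
      Real.sqrt (qs (y n - z n)) * Real.sqrt ((wt K)⁻¹) ≤ 3*ε/4 := by
    have hg : Tendsto (fun n => Real.sqrt (qs (y n - z n)) * Real.sqrt ((wt K)⁻¹)) atTop
        (nhds 0) := by
      have := hqu.sqrt.mul_const (Real.sqrt ((wt K)⁻¹))
      simpa using this
    exact hg.eventually (eventually_le_nhds (by linarith))
  have hfinal : ∀ᶠ n in atTop, dist ‖y n - z n‖ 0 < ε := by
    filter_upwards [E1, E1', E2, E2', E3, E4] with n h1 h1' h2 h2' h3 h4
    rw [Real.dist_eq, sub_zero, abs_of_nonneg (norm_nonneg _)]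
    have key : ∀ k, |(y n - z n) k| ≤ 3*ε/4 := by
      intro k
      rcases le_or_gt k K with hk | hk
      · have h5 := coord_le_qs (y n - z n) k
        have h6 : |(y n - z n) k| ≤ Real.sqrt (qs (y n - z n)) * Real.sqrt ((wt K)⁻¹) := by
          rw [← Real.sqrt_sq_eq_abs, ← Real.sqrt_mul (qs_nonneg _)]
          refine Real.sqrt_le_sqrt ?_
          have hwk : wt K ≤ wt k := wt_antitone hk
          rw [← div_eq_mul_inv, le_div_iff₀ (wt_pos K)]
          nlinarith [sq_nonneg ((y n - z n) k)]
        exact h6.trans h4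
      · have hkj : j m' < k := lt_trans hjm'K hk
        have hyb : max ((y n) k) 0 ≤ 3*(ε/16) := by
          have hmono := jExt_strictMono hj hkj
          have hQe := Q_le_nn (y n) (m'+1) hmono
          rw [Q_jExt] at hQe
          have h7 : W * max ((y n) k) 0 ≤ nn (y n) - Q (y n) j m' := by
            rw [hWdef]; linarith
          have h9 : W * max ((y n) k) 0 ≤ W * (3*(ε/16)) := by linarith
          exact le_of_mul_le_mul_left h9 hW
        have hzb : max ((z n) k) 0 ≤ 3*(ε/16) := by
          have hmono := jExt_strictMono hj hkj
          have hQe := Q_le_nn (z n) (m'+1) hmono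
          rw [Q_jExt] at hQe
          have h7 : W * max ((z n) k) 0 ≤ nn (z n) - Q (z n) j m' := by
            rw [hWdef]; linarith
          have h9 : W * max ((z n) k) 0 ≤ W * (3*(ε/16)) := by linarith
          exact le_of_mul_le_mul_left h9 hW
        have hmk : |(mid n) k| ≤ ε/16 + ε/16 := by
          have e : (mid n) k = x k - (x - mid n) k := by
            simp [BoundedContinuousFunction.coe_sub, Pi.sub_apply]
          rw [e]
          have h10 := abs_sub (x k) ((x - mid n) k)
          have h11 := abs_apply_le (x - mid n) k
          rw [show ‖x - mid n‖ = ‖x - mid n‖ from rfl] at h11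
          have h12 := hxK k hk
          calc |x k - (x - mid n) k| ≤ |x k| + |(x - mid n) k| := abs_sub _ _
            _ ≤ ε/16 + ε/16 := by
                refine add_le_add h12 (h11.trans h3)
        have hy1 : (y n) k ≤ max ((y n) k) 0 := le_max_left _ _
        have hz1 : (z n) k ≤ max ((z n) k) 0 := le_max_left _ _
        have hrel := hsumc n k
        have habs1 := neg_abs_le ((mid n) k)
        have habs2 := le_abs_self ((mid n) k)
        rw [hsubc n k, abs_le]
        constructor
        · linarith
        · linarith
    have hnorm : ‖y n - z n‖ ≤ 3*ε/4 := by
      refine (BoundedContinuousFunction.norm_le (by linarith)).2 fun k => ?_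
      rw [Real.norm_eq_abs]
      exact key k
    linarith
  exact eventually_atTop.mp hfinal



lemma alg1 {w T : ℝ} (h1 : -1 ≤ w) (h2 : w ≤ 1) (ht : 0 ≤ T) :
    (w - T)^2 - w^2 ≤ T^2 + 2*T := by nlinarith

lemma alg2 {N2 Q2 p q A lam : ℝ} (h2 : N2 ≤ p) (hq : Q2 ≤ q + A)
    (hpq : p + q ≤ (1-lam)^2) (hA : A ≤ lam) (h0 : 0 < lam) (h12 : lam ≤ 1/2) :
    N2 + Q2 ≤ 1 := by nlinarith

lemma alg3 {t δ g A q N2 Q2 : ℝ} (h4 : N2 ≤ (t+2*δ)^2) (hq : q ≤ 1/2) (hA : A ≤ g/3)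
    (hg : g = 1/2 - t^2) (hδ : δ = g/12) (t0 : 0 ≤ t) (ht34 : t ≤ 3/4)
    (hqs : Q2 ≤ q + A) (hg0 : 0 < g) : N2 + Q2 ≤ 1 := by nlinarith

lemma alg4 {t : ℝ} (t0 : 0 ≤ t) (ht : t^2 < 1/2) : t ≤ 3/4 := by
  nlinarith [sq_nonneg (t-1)]

set_option maxHeartbeats 1000000 in
lemma clause5 (f : ℕ → ℝ) (hf : Summable fun n => |f n|) (a : ℝ)
    (hne : {u : E | (Tendsto (⇑u) atTop (nhds 0) ∧ pp u ≤ 1) ∧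
      a < ∑' n : ℕ, f n * u n}.Nonempty) :
    1 / Real.sqrt 2 ≤ Metric.diam {u : E | (Tendsto (⇑u) atTop (nhds 0) ∧ pp u ≤ 1) ∧
      a < ∑' n : ℕ, f n * u n} := by
  set S : Set E := {u : E | (Tendsto (⇑u) atTop (nhds 0) ∧ pp u ≤ 1) ∧
      a < ∑' n : ℕ, f n * u n} with hSdef
  obtain ⟨u, hu⟩ := hne
  obtain ⟨⟨hunull, hup⟩, hua⟩ := hu
  have hSsub : S ⊆ Metric.closedBall 0 1 := by
    rintro v ⟨⟨-, hvp⟩, -⟩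
    rw [Metric.mem_closedBall, dist_zero_right]
    exact (norm_le_pp v).trans hvp
  have hSb : Bornology.IsBounded S := Metric.isBounded_closedBall.subset hSsub
  have tmain : ∀ t : ℝ, 0 ≤ t → t^2 < 1/2 → t ≤ Metric.diam S := by
    intro t t0 ht
    set S0 : ℝ := ∑' n : ℕ, f n * u n with hS0def
    have hσ : 0 < S0 - a := sub_pos.mpr hua
    set lam : ℝ := min (1/2 : ℝ) ((S0 - a) / (2 * (|S0| + 1))) with hlamdef
    have hlam0 : 0 < lam := lt_min (by norm_num) (by positivity)
    have hlam2 : lam ≤ 1/2 := min_le_left _ _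
    have hlamle : 0 ≤ 1 - lam := by linarith
    set u' : E := (1 - lam) • u with hu'def
    have hu'null : Tendsto (⇑u') atTop (nhds 0) := by
      have h0 : Tendsto (fun k => (1 - lam) * u k) atTop (nhds 0) := by
        simpa using hunull.const_mul (1 - lam)
      exact Tendsto.congr (fun k => by simp [hu'def]) h0
    have hpu' : pp u' ≤ 1 - lam := by
      rw [hu'def, pp_smul u hlamle]
      nlinarith [pp_nonneg u]
    have hppu'sq : nn u' ^2 + qs u' ≤ (1-lam)^2 := by
      have h := pp_sq u'
      have h2 : pp u' ^2 ≤ (1-lam)^2 := pow_le_pow_left₀ (pp_nonneg u') hpu' 2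
      linarith
    have hqsu'half : qs u' ≤ 1/2 := by
      have h1 : qs u' ≤ ‖u'‖^2 := qs_le_sq_norm u'
      have h3 : ‖u'‖^2 ≤ nn u'^2 := pow_le_pow_left₀ (norm_nonneg _) (norm_le_nn u') 2
      have h4 : (1-lam)^2 ≤ 1 := by nlinarith
      linarith
    have hsum_u : Summable fun k => f k * u k := by
      refine Summable.of_abs (Summable.of_nonneg_of_le (fun k => abs_nonneg _)
        (fun k => ?_) (hf.mul_right ‖u‖))
      rw [abs_mul]
      exact mul_le_mul_of_nonneg_left (abs_apply_le u k) (abs_nonneg _)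
    have hsum_u' : Summable fun k => f k * u' k := by
      refine Summable.of_abs (Summable.of_nonneg_of_le (fun k => abs_nonneg _)
        (fun k => ?_) (hf.mul_right ‖u'‖))
      rw [abs_mul]
      exact mul_le_mul_of_nonneg_left (abs_apply_le u' k) (abs_nonneg _)
    have hS0' : ∑' (k : ℕ), f k * u' k = (1 - lam) * S0 := by
      have hfun : (fun k : ℕ => f k * u' k) = fun k => (1-lam) * (f k * u k) := by
        funext k
        simp only [hu'def, BoundedContinuousFunction.coe_smul, Pi.smul_apply, smul_eq_mul]
        ring
      rw [hfun, tsum_mul_left, hS0def]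
    have hS0'a : a < (1-lam) * S0 := by
      have h1 : lam ≤ (S0 - a) / (2*(|S0|+1)) := min_le_right _ _
      have h2 : 0 ≤ |S0| := abs_nonneg S0
      have h3 : lam * |S0| ≤ ((S0 - a) / (2*(|S0|+1))) * |S0| := mul_le_mul_of_nonneg_right h1 h2
      have h4 : ((S0 - a) / (2*(|S0|+1))) * |S0| ≤ (S0 - a)/2 := by
        rw [div_mul_eq_mul_div, div_le_div_iff₀ (by positivity) (by norm_num)]
        nlinarith
      have h6 := neg_abs_le S0
      have h5 := le_abs_self S0
      nlinarith
    have hu'S : u' ∈ S := by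
      rw [hSdef]
      refine ⟨⟨hu'null, hpu'.trans (by linarith)⟩, ?_⟩
      rw [hS0']
      exact hS0'a
    set g : ℝ := 1/2 - t^2 with hgdef
    have hg0 : 0 < g := by rw [hgdef]; linarith
    set δ : ℝ := g/12 with hδdef
    have hδ0 : 0 < δ := by rw [hδdef]; linarith
    have hflim : Tendsto (fun n => |f n|) atTop (nhds 0) := hf.tendsto_atTop_zero
    have C1 : ∀ᶠ n in atTop, |f n| * t < (1-lam)*S0 - a := by
      have h0 : Tendsto (fun n => |f n| * t) atTop (nhds 0) := by
        simpa using hflim.mul_const t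
      exact h0.eventually (eventually_lt_nhds (by linarith))
    have C2 : ∀ᶠ n in atTop, ∀ k, n < k → u' k ≤ δ := by
      obtain ⟨N, hN⟩ := Metric.tendsto_atTop.mp hu'null δ hδ0
      refine eventually_atTop.mpr ⟨N, fun n hn k hk => ?_⟩
      have h0 := hN k (by omega)
      rw [Real.dist_eq, sub_zero] at h0
      exact (le_abs_self _).trans h0.le
    have C3 : ∀ᶠ n in atTop, |u' n| ≤ δ := by
      obtain ⟨N, hN⟩ := Metric.tendsto_atTop.mp hu'null δ hδ0
      refine eventually_atTop.mpr ⟨N, fun n hn => ?_⟩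
      have h0 := hN n hn
      rw [Real.dist_eq, sub_zero] at h0
      exact h0.le
    have C4 : ∀ᶠ n in atTop, wt n * (t^2 + 2*t) ≤ min lam (g/3) := by
      have hwt0 : Tendsto wt atTop (nhds 0) := summable_wt.tendsto_atTop_zero
      have h0 : Tendsto (fun n => wt n * (t^2 + 2*t)) atTop (nhds 0) := by
        simpa using hwt0.mul_const (t^2+2*t)
      refine h0.eventually (eventually_le_nhds ?_)
      exact lt_min hlam0 (by linarith)
    obtain ⟨n, hn1, hn2, hn3, hn4⟩ := (C1.and (C2.and (C3.and C4))).exists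
    set v : E := u' - t • en n with hvdef
    have hvnull : Tendsto (⇑v) atTop (nhds 0) := by
      refine hu'null.congr' ?_
      refine eventually_atTop.mpr ⟨n+1, fun k hk => ?_⟩
      have : v k = if k = n then u' n - t else u' k := by
        rw [hvdef]; exact sub_en_apply u' t n k
      rw [this, if_neg (by omega)]
    have hnnv : nn v ≤ max (nn u') (|u' n - t| + δ) := by
      rw [hvdef]
      exact pert u' t0 hδ0.le n hn2
    have hA : wt n * (t^2+2*t) ≤ lam := hn4.trans (min_le_left _ _)
    have hA2 : wt n * (t^2+2*t) ≤ g/3 := hn4.trans (min_le_right _ _)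
    have hwn : 0 ≤ wt n * (t^2+2*t) := mul_nonneg (wt_pos n).le (by nlinarith)
    have hqsv : qs v ≤ qs u' + wt n * (t^2 + 2*t) := by
      rw [hvdef, qs_pert]
      have h2 : |u' n| ≤ 1 := by
        have h3 : ‖u'‖ ≤ 1 := (norm_le_pp u').trans (hpu'.trans (by linarith))
        exact (abs_apply_le u' n).trans h3
      have h5 := abs_le.mp h2
      have h1 : (u' n - t)^2 - (u' n)^2 ≤ t^2 + 2*t := alg1 h5.1 h5.2 t0
      have h6 := mul_le_mul_of_nonneg_left h1 (wt_pos n).le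
      linarith
    have hppv : pp v ≤ 1 := by
      rw [pp_le_one_iff]
      have ht34 : t ≤ 3/4 := alg4 t0 ht
      rcases max_cases (nn u') (|u' n - t| + δ) with ⟨hmax, -⟩ | ⟨hmax, -⟩
      · have h1 : nn v ≤ nn u' := by rw [hmax] at hnnv; exact hnnv
        have h2 : nn v ^2 ≤ nn u' ^2 := pow_le_pow_left₀ (nn_nonneg v) h1 2
        exact alg2 h2 hqsv hppu'sq hA hlam0 hlam2
      · have h1 : nn v ≤ |u' n - t| + δ := by rw [hmax] at hnnv; exact hnnv
        have h2 : |u' n - t| ≤ δ + t := by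
          have h3 := abs_sub (u' n) t
          rw [abs_of_nonneg t0] at h3
          linarith [hn3, h3]
        have h3 : nn v ≤ t + 2*δ := by linarith
        have h4 : nn v^2 ≤ (t+2*δ)^2 := pow_le_pow_left₀ (nn_nonneg v) h3 2
        exact alg3 h4 hqsu'half hA2 hgdef hδdef t0 ht34 hqsv hg0
    have hfv : a < ∑' (k : ℕ), f k * v k := by
      have h1 : HasSum (fun k : ℕ => f k * u' k) ((1-lam)*S0) := by
        have h0 := hsum_u'.hasSum
        rwa [hS0'] at h0
      have h2 : HasSum (fun k : ℕ => f k * (t * en n k)) (f n * t) := by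
        have h3 : (fun k : ℕ => f k * (t * en n k)) = fun k => if k = n then f n * t else 0 := by
          funext k
          by_cases h : k = n
          · subst h; simp [en_apply]
          · simp [en_apply, h]
        rw [h3]
        exact hasSum_ite_eq n _
      have h5 := h1.sub h2
      have h6 : (fun k : ℕ => f k * u' k - f k * (t * en n k)) = fun k => f k * v k := by
        funext k
        rw [hvdef]
        simp only [BoundedContinuousFunction.coe_sub, BoundedContinuousFunction.coe_smul,
          Pi.sub_apply, Pi.smul_apply, smul_eq_mul]
        ring
      rw [h6] at h5
      rw [h5.tsum_eq]
      have h7 : f n * t ≤ |f n| * t := mul_le_mul_of_nonneg_right (le_abs_self _) t0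
      linarith
    have hvS : v ∈ S := by
      rw [hSdef]
      exact ⟨⟨hvnull, hppv⟩, hfv⟩
    have hdist : dist u' v = t := by
      have h9 : u' - v = t • en n := by rw [hvdef]; abel
      have h10 : ‖t • en n‖ = t := by
        refine le_antisymm ((BoundedContinuousFunction.norm_le t0).2 fun k => ?_) ?_
        · simp only [BoundedContinuousFunction.coe_smul, Pi.smul_apply, smul_eq_mul, en_apply,
            Real.norm_eq_abs]
          split_ifs with h
          · simp [abs_of_nonneg t0]
          · simpa using t0
        · have h11 := (t • en n).norm_coe_le_norm n
          simp only [BoundedContinuousFunction.coe_smul, Pi.smul_apply, smul_eq_mul, en_apply,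
            Real.norm_eq_abs] at h11
          simpa [abs_of_nonneg t0] using h11
      rw [dist_eq_norm, h9, h10]
    calc t = dist u' v := hdist.symm
      _ ≤ Metric.diam S := Metric.dist_le_diam_of_mem hSb hu'S hvS
  by_contra hcon
  push_neg at hcon
  obtain ⟨t, ht1, ht2⟩ := exists_between hcon
  have t0 : 0 ≤ t := (Metric.diam_nonneg).trans ht1.le
  have hsq : (1/Real.sqrt 2)^2 = 1/2 := by
    rw [div_pow, one_pow, Real.sq_sqrt (by norm_num : (0:ℝ) ≤ 2)]
  have hpos : 0 < 1/Real.sqrt 2 := by positivity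
  have ht3 : t^2 < 1/2 := by nlinarith
  exact absurd (tmain t t0 ht3) (not_le.mpr ht1)

lemma clause6 (x : E) (hx : Tendsto (⇑x) atTop (nhds 0)) (hp : pp x = 1) :
    ¬ (∀ ε > (0:ℝ), ∃ (f : ℕ → ℝ) (a : ℝ), Summable (fun n => |f n|) ∧
        x ∈ {u : E | (Tendsto (⇑u) atTop (nhds 0) ∧ pp u ≤ 1) ∧
          a < ∑' n : ℕ, f n * u n} ∧
        Metric.diam {u : E | (Tendsto (⇑u) atTop (nhds 0) ∧ pp u ≤ 1) ∧
          a < ∑' n : ℕ, f n * u n} < ε) := by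
  intro hall
  obtain ⟨f, a, hf, hxS, hdiam⟩ := hall (1/2) (by norm_num)
  have h1 := clause5 f hf a ⟨x, hxS⟩
  have hs2 : Real.sqrt 2 < 2 := by
    nlinarith [Real.sq_sqrt (by norm_num : (0:ℝ) ≤ 2), Real.sqrt_nonneg 2]
  have h0 : 0 < Real.sqrt 2 := Real.sqrt_pos.mpr (by norm_num)
  have h2 : (1:ℝ)/2 < 1/Real.sqrt 2 := by
    rw [div_lt_div_iff₀ (by norm_num) h0]
    linarith
  linarith

end S18

/-- There is an equivalent non-symmetric norm (gauge) `p` on `c₀` (realized as the space of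
null sequences inside `ℓ∞ = ℕ →ᵇ ℝ` with the sup norm) such that every point of the unit
sphere `{p = 1}` is a strongly extreme point of the unit ball `C = {x ∈ c₀ : p x ≤ 1}`,
while every nonempty slice of `C` (cut by an `ℓ₁` functional) has `‖·‖_∞`-diameter at least
`1/√2`; in particular no point of the unit sphere is a denting point of `C`. -/
theorem stmt18 :
    ∃ p : (ℕ →ᵇ ℝ) → ℝ,
      (∀ (x : ℕ →ᵇ ℝ) (t : ℝ), 0 ≤ t → p (t • x) = t * p x) ∧
      (∀ x y : ℕ →ᵇ ℝ, p (x + y) ≤ p x + p y) ∧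
      (∃ c C : ℝ, 0 < c ∧ ∀ x : ℕ →ᵇ ℝ, c * ‖x‖ ≤ p x ∧ p x ≤ C * ‖x‖) ∧
      (∀ x : ℕ →ᵇ ℝ, Tendsto (⇑x) atTop (nhds 0) → p x = 1 →
        ∀ (y z : ℕ → (ℕ →ᵇ ℝ)),
          (∀ n, Tendsto (⇑(y n)) atTop (nhds 0) ∧ p (y n) ≤ 1) →
          (∀ n, Tendsto (⇑(z n)) atTop (nhds 0) ∧ p (z n) ≤ 1) →
          Tendsto (fun n => ‖x - (1/2 : ℝ) • (y n + z n)‖) atTop (nhds 0) →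
          Tendsto (fun n => ‖y n - z n‖) atTop (nhds 0)) ∧
      (∀ f : ℕ → ℝ, Summable (fun n => |f n|) → ∀ a : ℝ,
        {u : ℕ →ᵇ ℝ | (Tendsto (⇑u) atTop (nhds 0) ∧ p u ≤ 1) ∧
            a < ∑' n : ℕ, f n * u n}.Nonempty →
        1 / Real.sqrt 2 ≤
          Metric.diam {u : ℕ →ᵇ ℝ | (Tendsto (⇑u) atTop (nhds 0) ∧ p u ≤ 1) ∧
            a < ∑' n : ℕ, f n * u n}) ∧
      (∀ x : ℕ →ᵇ ℝ, Tendsto (⇑x) atTop (nhds 0) → p x = 1 →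
        ¬ (∀ ε > (0 : ℝ), ∃ (f : ℕ → ℝ) (a : ℝ), Summable (fun n => |f n|) ∧
            x ∈ {u : ℕ →ᵇ ℝ | (Tendsto (⇑u) atTop (nhds 0) ∧ p u ≤ 1) ∧
              a < ∑' n : ℕ, f n * u n} ∧
            Metric.diam {u : ℕ →ᵇ ℝ | (Tendsto (⇑u) atTop (nhds 0) ∧ p u ≤ 1) ∧
              a < ∑' n : ℕ, f n * u n} < ε)) := by
  refine ⟨S18.pp, fun x t ht => S18.pp_smul x ht, S18.pp_add,
    ⟨1, 3, one_pos, fun x => ⟨by simpa using S18.norm_le_pp x, S18.pp_le_three x⟩⟩,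
    S18.clause4, S18.clause5, S18.clause6⟩
end
end

section
/- Let X be a Banach space with norm ‖·‖ and unit ball B_X, and let |||·||| be an equivalent norm on X with unit ball B. Suppose the restriction of |||·||| to the unit sphere S_X is weakly continuous at x ∈ S_X, and x is a point of continuity for B. Then x is a point of continuity for B_X. -/
open Filter Topology Metric

/-- Theorem 4.2 a): if the restriction of an equivalent norm `N = |||·|||` to the unit
sphere `S_X` is weakly continuous at `x ∈ S_X` and `x` is a point of continuity of the
`N`-unit ball `B`, then `x` is a point of continuity of `B_X`. -/
theorem stmt19 {X : Type*} [NormedAddCommGroup X] [NormedSpace ℝ X] [CompleteSpace X]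
    (N : X → ℝ)
    (hhom : ∀ (t : ℝ) (u : X), N (t • u) = |t| * N u)
    (hsub : ∀ u v : X, N (u + v) ≤ N u + N v)
    (hequiv : ∃ c C : ℝ, 0 < c ∧ ∀ u : X, c * ‖u‖ ≤ N u ∧ N u ≤ C * ‖u‖)
    (x : X) (hx : ‖x‖ = 1) (hNx : N x = 1)
    (hweakcont : ∀ ε > (0 : ℝ), ∃ (s : Finset (X →L[ℝ] ℝ)) (δ : ℝ), 0 < δ ∧
      ∀ y : X, ‖y‖ = 1 → (∀ f ∈ s, |f y - f x| < δ) → |N y - N x| < ε)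
    (hpcB : ∀ ε > (0 : ℝ), ∃ (s : Finset (X →L[ℝ] ℝ)) (δ : ℝ), 0 < δ ∧
      ∀ y : X, N y ≤ 1 → (∀ f ∈ s, |f y - f x| < δ) → ‖y - x‖ ≤ ε) :
    ∀ ε > (0 : ℝ), ∃ (s : Finset (X →L[ℝ] ℝ)) (δ : ℝ), 0 < δ ∧
      ∀ y : X, ‖y‖ ≤ 1 → (∀ f ∈ s, |f y - f x| < δ) → ‖y - x‖ ≤ ε := by
  classical
  intro ε hε
  obtain ⟨c, C, hc, hcC⟩ := hequiv
  have hxne : x ≠ 0 := by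
    intro h; rw [h, norm_zero] at hx; norm_num at hx
  obtain ⟨f₀, hf₀norm, hf₀x⟩ := exists_dual_vector ℝ x (norm_ne_zero_iff.2 hxne)
  -- point of continuity data for the N-ball at level ε/2
  obtain ⟨s₁, δ₁, hδ₁, h₁⟩ := hpcB (ε / 2) (by linarith)
  set M₁ : ℝ := 1 + ∑ f ∈ s₁, ‖f‖ with hM₁def
  have hM₁pos : 0 < M₁ := by
    have : (0 : ℝ) ≤ ∑ f ∈ s₁, ‖f‖ := Finset.sum_nonneg fun f _ => norm_nonneg f
    linarith
  have hM₁ge : ∀ f ∈ s₁, ‖f‖ ≤ M₁ := by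
    intro f hf
    have := Finset.single_le_sum (f := fun g : X →L[ℝ] ℝ => ‖g‖)
      (fun g _ => norm_nonneg g) hf
    simp only [hM₁def]; linarith
  have hM₁eq : M₁ * (δ₁ / (2 * M₁)) = δ₁ / 2 := by field_simp
  set ε' : ℝ := min (ε / 2) (δ₁ / (2 * M₁)) with hε'def
  have hε'pos : 0 < ε' := lt_min (by linarith) (div_pos hδ₁ (by linarith))
  -- weak continuity data at level ε'
  obtain ⟨s₂, δ₂, hδ₂, h₂⟩ := hweakcont ε' hε'pos
  set M₂ : ℝ := 1 + ∑ f ∈ s₂, ‖f‖ with hM₂def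
  have hM₂pos : 0 < M₂ := by
    have : (0 : ℝ) ≤ ∑ f ∈ s₂, ‖f‖ := Finset.sum_nonneg fun f _ => norm_nonneg f
    linarith
  have hM₂ge : ∀ f ∈ s₂, ‖f‖ ≤ M₂ := by
    intro f hf
    have := Finset.single_le_sum (f := fun g : X →L[ℝ] ℝ => ‖g‖)
      (fun g _ => norm_nonneg g) hf
    simp only [hM₂def]; linarith
  have hM₂eq : M₂ * (δ₂ / (2 * M₂)) = δ₂ / 2 := by field_simp
  set η : ℝ := min (1 / 2) (δ₂ / (2 * M₂)) with hηdef
  have hηpos : 0 < η := lt_min (by norm_num) (div_pos hδ₂ (by linarith))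
  set δ : ℝ := min η (min (δ₂ / 2) (δ₁ / 2)) with hδdef
  have hδpos : 0 < δ := lt_min hηpos (lt_min (by linarith) (by linarith))
  have hε'half : ε' ≤ ε / 2 := min_le_left _ _
  have hε'le : ε' ≤ δ₁ / (2 * M₁) := min_le_right _ _
  have hηhalf : η ≤ 1 / 2 := min_le_left _ _
  have hη₂ : η ≤ δ₂ / (2 * M₂) := min_le_right _ _
  have hδle : δ ≤ η := min_le_left _ _
  have hδ₂' : δ ≤ δ₂ / 2 := (min_le_right _ _).trans (min_le_left _ _)
  have hδ₁' : δ ≤ δ₁ / 2 := (min_le_right _ _).trans (min_le_right _ _)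
  clear_value M₁ ε' M₂ η δ
  refine ⟨insert f₀ (s₁ ∪ s₂), δ, hδpos, ?_⟩
  intro y hy hfy
  have hf₀xval : f₀ x = 1 := by rw [hf₀x, hx]; norm_num
  -- ‖y‖ is close to 1
  have hf₀y : |f₀ y - f₀ x| < δ := hfy f₀ (by simp)
  have hf₀ylb : 1 - δ < f₀ y := by
    have := abs_lt.1 hf₀y
    rw [hf₀xval] at this; linarith [this.1]
  have hylb : 1 - δ < ‖y‖ := by
    have h1 : f₀ y ≤ |f₀ y| := le_abs_self _
    have h2 : |f₀ y| ≤ ‖f₀‖ * ‖y‖ := by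
      have := f₀.le_opNorm y
      rwa [Real.norm_eq_abs] at this
    rw [hf₀norm, one_mul] at h2
    exact hf₀ylb.trans_le (h1.trans h2)
  have hypos : 0 < ‖y‖ := lt_trans (by linarith) hylb
  set w : X := ‖y‖⁻¹ • y with hwdef
  have hwnorm : ‖w‖ = 1 := by
    rw [hwdef, norm_smul, norm_inv, norm_norm, inv_mul_cancel₀ hypos.ne']
  have hwy : ‖w - y‖ = 1 - ‖y‖ := by
    have : w - y = (‖y‖⁻¹ - 1) • y := by rw [hwdef, sub_smul, one_smul]
    rw [this, norm_smul, Real.norm_eq_abs]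
    have hinv : 1 ≤ ‖y‖⁻¹ := one_le_inv₀ hypos |>.2 hy
    rw [abs_of_nonneg (by linarith)]
    field_simp
  have hyeq : y = ‖y‖ • w := by
    rw [hwdef, smul_smul, mul_inv_cancel₀ hypos.ne', one_smul]
  clear_value w
  -- w is weakly close to x for s₂
  have hNw : |N w - 1| < ε' := by
    rw [← hNx]
    apply h₂ w hwnorm
    intro f hf
    have h1y : 1 - ‖y‖ < η := by linarith
    have hkey : M₂ * (1 - ‖y‖) < δ₂ / 2 := by
      have h5 : M₂ * (1 - ‖y‖) < M₂ * η := mul_lt_mul_of_pos_left h1y hM₂pos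
      have hMη : M₂ * η ≤ δ₂ / 2 := by
        calc M₂ * η ≤ M₂ * (δ₂ / (2 * M₂)) := mul_le_mul_of_nonneg_left hη₂ hM₂pos.le
          _ = δ₂ / 2 := hM₂eq
      linarith
    have hfy' : |f y - f x| < δ₂ / 2 := lt_of_lt_of_le (hfy f (by simp [hf])) hδ₂'
    have hdiff : |f w - f y| < δ₂ / 2 := by
      have h1 : |f (w - y)| ≤ ‖f‖ * ‖w - y‖ := by
        have := f.le_opNorm (w - y)
        rwa [Real.norm_eq_abs] at this
      have h2 : ‖f‖ * ‖w - y‖ ≤ M₂ * (1 - ‖y‖) := by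
        rw [hwy]
        exact mul_le_mul (hM₂ge f hf) le_rfl (by linarith) hM₂pos.le
      calc |f w - f y| = |f (w - y)| := by rw [map_sub]
        _ ≤ M₂ * (1 - ‖y‖) := le_trans h1 h2
        _ < δ₂ / 2 := hkey
    calc |f w - f x| ≤ |f w - f y| + |f y - f x| := abs_sub_le _ _ _
      _ < δ₂ / 2 + δ₂ / 2 := add_lt_add hdiff hfy'
      _ = δ₂ := by ring
  have hNwpos : 0 ≤ N w :=
    le_trans (mul_nonneg hc.le (norm_nonneg w)) (hcC w).1
  have hNy : N y < 1 + ε' := by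
    have hNyw : N y = ‖y‖ * N w := by
      rw [hyeq, hhom, abs_of_nonneg hypos.le, ← hyeq]
    have hle : N y ≤ N w := by
      rw [hNyw]
      calc ‖y‖ * N w ≤ 1 * N w := mul_le_mul_of_nonneg_right hy hNwpos
        _ = N w := one_mul _
    have := abs_lt.1 hNw
    linarith [this.2]
  set m : ℝ := max 1 (N y) with hmdef
  have hm1 : 1 ≤ m := le_max_left _ _
  have hmN : N y ≤ m := le_max_right _ _
  have hmlt : m < 1 + ε' := max_lt (by linarith) hNy
  clear_value m
  have hmpos : 0 < m := by linarith
  set z : X := m⁻¹ • y with hzdef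
  have hNz : N z ≤ 1 := by
    rw [hzdef, hhom, abs_of_nonneg (inv_nonneg.2 hmpos.le)]
    calc m⁻¹ * N y ≤ m⁻¹ * m := mul_le_mul_of_nonneg_left hmN (inv_nonneg.2 hmpos.le)
      _ = 1 := inv_mul_cancel₀ hmpos.ne'
  have hzy : ‖z - y‖ ≤ m - 1 := by
    have heq : z - y = (m⁻¹ - 1) • y := by rw [hzdef, sub_smul, one_smul]
    have hminv : m⁻¹ ≤ 1 := inv_le_one_of_one_le₀ hm1
    have hmm : m * m⁻¹ = 1 := mul_inv_cancel₀ hmpos.ne'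
    calc ‖z - y‖ = |m⁻¹ - 1| * ‖y‖ := by rw [heq, norm_smul, Real.norm_eq_abs]
      _ = (1 - m⁻¹) * ‖y‖ := by rw [abs_of_nonpos (by linarith), neg_sub]
      _ ≤ (1 - m⁻¹) * 1 := mul_le_mul_of_nonneg_left hy (by linarith)
      _ = 1 - m⁻¹ := mul_one _
      _ = (m - 1) * m⁻¹ := by rw [sub_mul, hmm, one_mul]
      _ ≤ (m - 1) * 1 := mul_le_mul_of_nonneg_left hminv (by linarith)
      _ = m - 1 := mul_one _
  clear_value z
  have hzylt : ‖z - y‖ < ε' := lt_of_le_of_lt hzy (by linarith)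
  have hzx : ‖z - x‖ ≤ ε / 2 := by
    apply h₁ z hNz
    intro f hf
    have h4 : M₁ * ε' ≤ δ₁ / 2 := by
      calc M₁ * ε' ≤ M₁ * (δ₁ / (2 * M₁)) := mul_le_mul_of_nonneg_left hε'le hM₁pos.le
        _ = δ₁ / 2 := hM₁eq
    have hfy' : |f y - f x| < δ₁ / 2 := lt_of_lt_of_le (hfy f (by simp [hf])) hδ₁'
    have hdiff : |f z - f y| < δ₁ / 2 := by
      have h1 : |f (z - y)| ≤ ‖f‖ * ‖z - y‖ := by
        have := f.le_opNorm (z - y)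
        rwa [Real.norm_eq_abs] at this
      have h2 : ‖f‖ * ‖z - y‖ ≤ M₁ * ‖z - y‖ :=
        mul_le_mul_of_nonneg_right (hM₁ge f hf) (norm_nonneg _)
      have h3 : M₁ * ‖z - y‖ < M₁ * ε' := mul_lt_mul_of_pos_left hzylt hM₁pos
      calc |f z - f y| = |f (z - y)| := by rw [map_sub]
        _ ≤ M₁ * ‖z - y‖ := le_trans h1 h2
        _ < M₁ * ε' := h3
        _ ≤ δ₁ / 2 := h4
    calc |f z - f x| ≤ |f z - f y| + |f y - f x| := abs_sub_le _ _ _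
      _ < δ₁ / 2 + δ₁ / 2 := add_lt_add hdiff hfy'
      _ = δ₁ := by ring
  have htri : ‖y - x‖ ≤ ‖z - y‖ + ‖z - x‖ := by
    calc ‖y - x‖ = ‖(y - z) + (z - x)‖ := by congr 1; abel
      _ ≤ ‖y - z‖ + ‖z - x‖ := norm_add_le _ _
      _ = ‖z - y‖ + ‖z - x‖ := by rw [norm_sub_rev]
  linarith
end
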